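/- arXiv:1107.0079 — 5 statements merged into one kernel-verified Lean document; each statement's English description precedes it below -/
import Mathlib

section
/- For every sequence (d_n) of positive reals with (log n)/d_n → 0, one has limsup_{n→∞} d_n · P(S_n > n d_n) ≤ 1; equivalently, P(S_n > n d_n) ≤ (1 + o(1)) d_n^{−1} as n → ∞. -/
open MeasureTheory Filter
set_option maxHeartbeats 2000000

private lemma exp_sub_one_le' {x : ℝ} : Real.exp x - 1 ≤ x * Real.exp x := by
  have h1 := Real.add_one_le_exp (-x)
  rw [Real.exp_neg] at h1
  have h2 := Real.exp_pos x
  have h3 : (Real.exp x)⁻¹ * Real.exp x = 1 := inv_mul_cancel₀ h2.ne'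
  nlinarith [mul_le_mul_of_nonneg_right h1 h2.le]

private lemma exp_diff_le' {x y : ℝ} :
    Real.exp y - Real.exp x ≤ (y - x) * Real.exp y := by
  have h1 := Real.add_one_le_exp (x - y)
  have h2 := Real.exp_pos y
  have h3 : Real.exp (x - y) * Real.exp y = Real.exp x := by
    rw [← Real.exp_add]; ring_nf
  nlinarith [mul_le_mul_of_nonneg_right h1 h2.le]

private lemma exp_convex_bound' {s t : ℝ} (ht : 0 ≤ t) (ht1 : t ≤ 1) :
    Real.exp (t * s) ≤ 1 + t * Real.exp s := by
  have h := convexOn_exp.2 (Set.mem_univ (0:ℝ)) (Set.mem_univ s)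
    (by linarith : (0:ℝ) ≤ 1 - t) ht (by ring)
  simp only [smul_eq_mul, mul_zero, zero_add, Real.exp_zero, mul_one] at h
  calc Real.exp (t * s) ≤ 1 - t + t * Real.exp s := h
    _ ≤ 1 + t * Real.exp s := by linarith

private lemma level_bound' (g : ℝ → ℝ) (hg : Monotone g) (b : ℕ → ℝ) (hb : Monotone b)
    (hb0 : b 0 = 0) (K : ℕ) (y : ℝ) (hy : 0 ≤ y) :
    g (min y (b K)) ≤ g 0 + ∑ j ∈ Finset.range K,
      (g (b (j + 1)) - g (b j)) * (if b j < y then 1 else 0) := by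
  induction K with
  | zero => simp [hb0, min_eq_right hy]
  | succ K ih =>
    rw [Finset.sum_range_succ]
    by_cases hcase : b K < y
    · have h1 : g (min y (b (K + 1))) ≤ g (b (K + 1)) := hg (min_le_right _ _)
      have h2 : g (min y (b K)) = g (b K) := by rw [min_eq_right hcase.le]
      rw [if_pos hcase, mul_one]
      rw [h2] at ih
      linarith
    · push_neg at hcase
      have hmin : min y (b (K + 1)) = min y (b K) := by
        rw [min_eq_left (hcase.trans (hb (Nat.le_succ K))), min_eq_left hcase]
      rw [hmin, if_neg (not_lt.mpr hcase), mul_zero, add_zero]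
      exact ih

private lemma integrable_of_bounded' {Ω : Type*} [MeasurableSpace Ω] {P : Measure Ω}
    [IsProbabilityMeasure P] {f : Ω → ℝ} (hf : Measurable f) (C : ℝ) (h : ∀ ω, |f ω| ≤ C) :
    Integrable f P :=
  (integrable_const C).mono' hf.aestronglyMeasurable (ae_of_all _ fun ω => by
    simpa [Real.norm_eq_abs] using h ω)

private lemma key_bound {Ω : Type*} [MeasurableSpace Ω] (P : Measure Ω) [IsProbabilityMeasure P]
    (ξ : ℕ → Ω → ℝ) (hmeas : ∀ n, Measurable (ξ n))
    (hnonneg : ∀ n ω, 0 ≤ ξ n ω)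
    (hindep : ProbabilityTheory.iIndepFun ξ P)
    (hident : ∀ n, P.map (ξ n) = P.map (ξ 0))
    (δ x₀ C₂ : ℝ) (hδ0 : 0 < δ) (hδ1 : δ ≤ 1/8)
    (hx₀ : 1 ≤ x₀) (hC₂ : C₂ = max x₀ (1 + δ))
    (htail1 : ∀ x, x₀ ≤ x → (P {ω | x < ξ 0 ω}).toReal ≤ (1 + δ) / x)
    (n : ℕ) (hn : 1 ≤ n) (dn : ℝ) (hdn : 1 ≤ dn)
    (M s lam R : ℝ) (K : ℕ)
    (hM : M = (1 - δ) * (n * dn)) (hs : s = (1 - δ/2) * Real.log dn)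
    (hlam : lam = s / M) (hK : K = Nat.clog 2 ⌈M⌉₊)
    (hR : R = (2 * Real.exp 1 + C₂) * K + 2 * C₂ * Real.exp s)
    (hM2 : 2 ≤ M) (hMx₀ : x₀ ≤ M) (hlam2 : lam ≤ 1/2) (hRd : R / dn ≤ δ/2) :
    dn * (P {ω | (n:ℝ) * dn < ∑ l ∈ Finset.range n, ξ l ω}).toReal
      ≤ (1 + δ)/(1 - δ) + Real.exp (-((1 - δ/2)^2/(1 - δ) - 1) * Real.log dn) := by

  have hδ' : (0:ℝ) < 1 - δ := by linarith
  have hdn0 : (0:ℝ) < dn := by linarith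
  have hn0 : (0:ℝ) < n := by exact_mod_cast hn
  have hM0 : (0:ℝ) < M := by linarith
  have hlogdn : 0 ≤ Real.log dn := Real.log_nonneg hdn
  have hs0 : 0 ≤ s := by
    rw [hs]
    have h1 : (0:ℝ) ≤ 1 - δ/2 := by linarith
    exact mul_nonneg h1 hlogdn
  have hlam0 : 0 ≤ lam := by rw [hlam]; exact div_nonneg hs0 hM0.le
  have hC₂pos : (0:ℝ) < C₂ := by
    rw [hC₂]
    have h1 : (0:ℝ) < 1 + δ := by linarith
    exact lt_max_of_lt_right h1
  set p : ℝ → ℝ := fun x => (P {ω | x < ξ 0 ω}).toReal with hp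
  have hp_nonneg : ∀ x, 0 ≤ p x := fun x => ENNReal.toReal_nonneg
  have hp_le_one : ∀ x, p x ≤ 1 := by
    intro x
    have h1 : P {ω | x < ξ 0 ω} ≤ 1 := prob_le_one
    have h2 := ENNReal.toReal_mono ENNReal.one_ne_top h1
    simpa using h2
  have hpC : ∀ x, 0 < x → p x ≤ C₂ / x := by
    intro x hx
    rcases le_or_gt x₀ x with h | h
    · refine (htail1 x h).trans ?_
      have h1 : (1:ℝ) + δ ≤ C₂ := by rw [hC₂]; exact le_max_right _ _
      gcongr
    · calc p x ≤ 1 := hp_le_one x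
        _ ≤ C₂ / x := by
            rw [le_div_iff₀ hx, one_mul]
            have h2 : x₀ ≤ C₂ := by rw [hC₂]; exact le_max_left _ _
            linarith
  -- the levels
  have hceil2 : 2 ≤ ⌈M⌉₊ := by
    have h1 : ((2:ℕ):ℝ) ≤ M := by exact_mod_cast hM2
    have h2 := Nat.ceil_mono h1
    simpa using h2
  have hK1 : 1 ≤ K := by rw [hK]; exact Nat.clog_pos one_lt_two hceil2
  have hMle : M ≤ 2^K := by
    have h1 : M ≤ (⌈M⌉₊ : ℝ) := Nat.le_ceil M
    have h2 : ⌈M⌉₊ ≤ 2^K := by rw [hK]; exact Nat.le_pow_clog one_lt_two _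
    have h3 : ((⌈M⌉₊ : ℕ) : ℝ) ≤ ((2^K : ℕ) : ℝ) := by exact_mod_cast h2
    push_cast at h3
    linarith
  set b : ℕ → ℝ := fun j => if j = 0 then 0 else M / 2^(K - j) with hb
  have hb0 : b 0 = 0 := rfl
  have hbK : b K = M := by
    have : K ≠ 0 := by omega
    simp [hb, this, Nat.sub_self]
  have hbpos : ∀ j, 1 ≤ j → 0 < b j := by
    intro j hj
    have : j ≠ 0 := by omega
    simp only [hb, if_neg this]
    positivity
  have hbnn : ∀ j, 0 ≤ b j := by
    intro j
    rcases Nat.eq_zero_or_pos j with h | h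
    · simp [h, hb0]
    · exact (hbpos j h).le
  have hbmono : Monotone b := by
    intro i j hij
    rcases Nat.eq_zero_or_pos i with h | h
    · rw [h, hb0]; exact hbnn j
    · have hi : i ≠ 0 := by omega
      have hj : j ≠ 0 := by omega
      simp only [hb, if_neg hi, if_neg hj]
      apply div_le_div_of_nonneg_left hM0.le (by positivity)
      exact pow_le_pow_right₀ one_le_two (by omega)
  -- truncated variables
  set Y : ℕ → Ω → ℝ := fun i ω => min (ξ i ω) M with hY
  have hYmeas : ∀ i, Measurable (Y i) := fun i => (hmeas i).min measurable_const
  set T : Ω → ℝ := fun ω => ∑ i ∈ Finset.range n, Y i ω with hT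
  have hTmeas : Measurable T := by
    apply Finset.measurable_sum
    intro i _
    exact hYmeas i
  have hYnn : ∀ i ω, 0 ≤ Y i ω := fun i ω => le_min (hnonneg i ω) hM0.le
  have hYle : ∀ i ω, Y i ω ≤ M := fun i ω => min_le_right _ _
  have hTbd : ∀ ω, |T ω| ≤ n * M := by
    intro ω
    rw [abs_of_nonneg (Finset.sum_nonneg fun i _ => hYnn i ω)]
    calc T ω ≤ ∑ _i ∈ Finset.range n, M := Finset.sum_le_sum fun i _ => hYle i ω
      _ = n * M := by simp [mul_comm]
  have hint : Integrable (fun ω => Real.exp (lam * T ω)) P := by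
    apply integrable_of_bounded' ((hTmeas.const_mul lam).exp) (Real.exp (lam * (n * M)))
    intro ω
    rw [abs_of_nonneg (Real.exp_pos _).le, Real.exp_le_exp]
    have := hTbd ω
    have h1 : T ω ≤ n * M := (le_abs_self _).trans this
    exact mul_le_mul_of_nonneg_left h1 hlam0
  -- Chernoff
  have chernoff := ProbabilityTheory.measure_ge_le_exp_mul_mgf (μ := P) (X := T)
    ((n:ℝ) * dn) hlam0 hint
  -- independence and identical distribution of the truncated variables
  have hYindep : ProbabilityTheory.iIndepFun Y P := by
    have h1 := hindep.comp (fun _ => fun x : ℝ => min x M)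
      (fun _ => measurable_id.min measurable_const)
    exact h1
  have hmgf_sum : ProbabilityTheory.mgf T P lam
      = ∏ i ∈ Finset.range n, ProbabilityTheory.mgf (Y i) P lam := by
    have h1 : T = ∑ i ∈ Finset.range n, Y i := by
      funext ω; simp [hT, Finset.sum_apply]
    rw [h1]
    exact hYindep.mgf_sum hYmeas _
  have hg_meas : Measurable (fun x : ℝ => Real.exp (lam * min x M)) :=
    ((measurable_id.min measurable_const).const_mul lam).exp
  have hmgf_ident : ∀ i, ProbabilityTheory.mgf (Y i) P lam
      = ProbabilityTheory.mgf (Y 0) P lam := by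
    intro i
    have key : ∀ k, ProbabilityTheory.mgf (Y k) P lam
        = ∫ x, Real.exp (lam * min x M) ∂(P.map (ξ k)) := by
      intro k
      rw [ProbabilityTheory.mgf]
      rw [integral_map (hmeas k).aemeasurable hg_meas.aestronglyMeasurable]
    rw [key i, key 0, hident i]
  -- bound on the mgf of a single truncated variable
  have hgmono : Monotone (fun x : ℝ => Real.exp (lam * x)) := by
    intro x y hxy
    exact Real.exp_le_exp.2 (mul_le_mul_of_nonneg_left hxy hlam0)
  have hmgfY : ProbabilityTheory.mgf (Y 0) P lam
      ≤ 1 + ∑ j ∈ Finset.range K,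
          (Real.exp (lam * b (j+1)) - Real.exp (lam * b j)) * p (b j) := by
    have hpt : ∀ ω, Real.exp (lam * Y 0 ω) ≤ 1 + ∑ j ∈ Finset.range K,
        (Real.exp (lam * b (j+1)) - Real.exp (lam * b j))
          * (if b j < ξ 0 ω then 1 else 0) := by
      intro ω
      have h1 := level_bound' (fun x => Real.exp (lam * x)) hgmono b hbmono hb0 K
        (ξ 0 ω) (hnonneg 0 ω)
      simp only [mul_zero, Real.exp_zero] at h1
      rw [hbK] at h1
      exact h1
    have hSmeas : ∀ j : ℕ, MeasurableSet {ω | b j < ξ 0 ω} :=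
      fun j => (hmeas 0) measurableSet_Ioi
    have hterm_eq : ∀ j : ℕ, (fun ω => (Real.exp (lam * b (j+1)) - Real.exp (lam * b j))
        * (if b j < ξ 0 ω then 1 else 0))
        = Set.indicator {ω | b j < ξ 0 ω}
            (fun _ => Real.exp (lam * b (j+1)) - Real.exp (lam * b j)) := by
      intro j
      funext ω
      simp [Set.indicator_apply, mul_ite, Set.mem_setOf_eq]
    have hterm_int : ∀ j ∈ Finset.range K, Integrable (fun ω =>
        (Real.exp (lam * b (j+1)) - Real.exp (lam * b j))
          * (if b j < ξ 0 ω then 1 else 0)) P := by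
      intro j _
      rw [hterm_eq j]
      exact (integrable_const _).indicator (hSmeas j)
    have hF_int : Integrable (fun ω => 1 + ∑ j ∈ Finset.range K,
        (Real.exp (lam * b (j+1)) - Real.exp (lam * b j))
          * (if b j < ξ 0 ω then 1 else 0)) P := by
      exact (integrable_const 1).add (integrable_finset_sum _ hterm_int)
    have hL_int : Integrable (fun ω => Real.exp (lam * Y 0 ω)) P := by
      apply integrable_of_bounded' ((( hYmeas 0).const_mul lam).exp) (Real.exp (lam * M))
      intro ω
      rw [abs_of_nonneg (Real.exp_pos _).le, Real.exp_le_exp]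
      exact mul_le_mul_of_nonneg_left (hYle 0 ω) hlam0
    have hmono := integral_mono hL_int hF_int hpt
    rw [ProbabilityTheory.mgf]
    refine hmono.trans (le_of_eq ?_)
    rw [integral_add (integrable_const 1) (integrable_finset_sum _ hterm_int)]
    rw [integral_finset_sum _ hterm_int]
    congr 1
    · simp
    · apply Finset.sum_congr rfl
      intro j _
      rw [hterm_eq j, integral_indicator_const _ (hSmeas j), smul_eq_mul, mul_comm]
      rfl
  -- numeric bound on the level sum
  have hsum_le : ∑ j ∈ Finset.range K,
      (Real.exp (lam * b (j+1)) - Real.exp (lam * b j)) * p (b j) ≤ lam * R := by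
    have hbound : ∀ j ∈ Finset.range K,
        (Real.exp (lam * b (j+1)) - Real.exp (lam * b j)) * p (b j)
          ≤ lam * (2 * Real.exp 1) + lam * C₂ * (1 + (2:ℝ)^(j+1) / 2^K * Real.exp s) := by
      intro j hj
      rw [Finset.mem_range] at hj
      rcases Nat.eq_zero_or_pos j with hj0 | hj1
      · -- j = 0
        subst hj0
        have hb1le : b 1 ≤ 2 := by
          have h2K : (2:ℝ)^K = 2 * 2^(K-1) := by
            rw [← pow_succ']
            congr 1
            omega
          have : b 1 = M / 2^(K-1) := by simp [hb]
          rw [this, div_le_iff₀ (by positivity)]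
          linarith
        have hlb1 : lam * b 1 ≤ 1 := by
          have h1 : lam * b 1 ≤ (1/2) * 2 :=
            mul_le_mul hlam2 hb1le (hbnn 1) (by norm_num)
          linarith
        have hlb1' : 0 ≤ lam * b 1 := mul_nonneg hlam0 (hbnn 1)
        have hΔnn : 0 ≤ Real.exp (lam * b 1) - Real.exp (lam * b 0) :=
          sub_nonneg.2 (Real.exp_le_exp.2 (mul_le_mul_of_nonneg_left
            (hbmono (show (0:ℕ) ≤ 1 by norm_num)) hlam0))
        have h1 : (Real.exp (lam * b 1) - Real.exp (lam * b 0)) * p (b 0)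
            ≤ Real.exp (lam * b 1) - Real.exp (lam * b 0) := by
          nlinarith [hp_le_one (b 0), hp_nonneg (b 0)]
        have h2 : Real.exp (lam * b 1) - Real.exp (lam * b 0) ≤ lam * (2 * Real.exp 1) := by
          rw [hb0, mul_zero, Real.exp_zero]
          have h3 := exp_sub_one_le' (x := lam * b 1)
          have h4 : Real.exp (lam * b 1) ≤ Real.exp 1 := Real.exp_le_exp.2 hlb1
          have h5 : lam * b 1 * Real.exp (lam * b 1) ≤ lam * b 1 * Real.exp 1 :=
            mul_le_mul_of_nonneg_left h4 hlb1'
          have h6 : lam * b 1 ≤ lam * 2 := mul_le_mul_of_nonneg_left hb1le hlam0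
          have h7 : lam * b 1 * Real.exp 1 ≤ lam * 2 * Real.exp 1 :=
            mul_le_mul_of_nonneg_right h6 (Real.exp_pos 1).le
          linarith
        have h5 : 0 ≤ lam * C₂ * (1 + (2:ℝ)^(0+1) / 2^K * Real.exp s) := by positivity
        linarith
      · -- 1 ≤ j
        have hjK : j + 1 ≤ K := hj
        have hbj_pos : 0 < b j := hbpos j hj1
        have hbj : b j = M / 2^(K - j) := by
          have : j ≠ 0 := by omega
          simp [hb, this]
        have hbj1 : b (j+1) = M / 2^(K - (j+1)) := by
          simp [hb]
        have hdouble : b (j+1) = 2 * b j := by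
          rw [hbj, hbj1]
          have h2K : (2:ℝ)^(K-j) = 2 * 2^(K-(j+1)) := by
            rw [← pow_succ']
            congr 1
            omega
          rw [h2K]
          field_simp
        have hΔ : Real.exp (lam * b (j+1)) - Real.exp (lam * b j)
            ≤ lam * b j * Real.exp (lam * b (j+1)) := by
          have h1 := exp_diff_le' (x := lam * b j) (y := lam * b (j+1))
          have h2 : lam * b (j+1) - lam * b j = lam * b j := by
            rw [hdouble]; ring
          rw [h2] at h1
          exact h1
        have hΔnn : 0 ≤ Real.exp (lam * b (j+1)) - Real.exp (lam * b j) :=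
          sub_nonneg.2 (Real.exp_le_exp.2 (mul_le_mul_of_nonneg_left
            (hbmono (Nat.le_succ j)) hlam0))
        have hpbj : p (b j) ≤ C₂ / b j := hpC (b j) hbj_pos
        have hstep : (Real.exp (lam * b (j+1)) - Real.exp (lam * b j)) * p (b j)
            ≤ (lam * b j * Real.exp (lam * b (j+1))) * (C₂ / b j) := by
          apply mul_le_mul hΔ hpbj (hp_nonneg _)
          positivity
        have heq : (lam * b j * Real.exp (lam * b (j+1))) * (C₂ / b j)
            = lam * C₂ * Real.exp (lam * b (j+1)) := by
          field_simp
        -- exponent identity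
        have hexpid : lam * b (j+1) = ((2:ℝ)^(j+1) / 2^K) * s := by
          rw [hlam, hbj1]
          have h2 : (2:ℝ)^K = 2^(K-(j+1)) * 2^(j+1) := by
            rw [← pow_add]
            congr 1
            omega
          rw [h2]
          field_simp
        have ht0 : (0:ℝ) ≤ (2:ℝ)^(j+1) / 2^K := by positivity
        have ht1 : (2:ℝ)^(j+1) / 2^K ≤ 1 := by
          rw [div_le_one (by positivity)]
          exact pow_le_pow_right₀ one_le_two hjK
        have hconv : Real.exp (lam * b (j+1)) ≤ 1 + (2:ℝ)^(j+1) / 2^K * Real.exp s := by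
          rw [hexpid]
          exact exp_convex_bound' ht0 ht1
        have h6 : 0 ≤ lam * (2 * Real.exp 1) := by positivity
        calc (Real.exp (lam * b (j+1)) - Real.exp (lam * b j)) * p (b j)
            ≤ lam * C₂ * Real.exp (lam * b (j+1)) := by rw [← heq]; exact hstep
          _ ≤ lam * C₂ * (1 + (2:ℝ)^(j+1) / 2^K * Real.exp s) := by
              apply mul_le_mul_of_nonneg_left hconv (by positivity)
          _ ≤ lam * (2 * Real.exp 1) + lam * C₂ * (1 + (2:ℝ)^(j+1) / 2^K * Real.exp s) := by
              linarith
    refine (Finset.sum_le_sum hbound).trans ?_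
    have hgeom : ∑ j ∈ Finset.range K, (2:ℝ)^(j+1) / 2^K ≤ 2 := by
      rw [← Finset.sum_div, div_le_iff₀ (by positivity : (0:ℝ) < 2^K)]
      have h1 : ∑ j ∈ Finset.range K, (2:ℝ)^(j+1) = 2 * (2^K - 1) := by
        have h2 : ∀ j, (2:ℝ)^(j+1) = 2^j * 2 := fun j => pow_succ 2 j
        simp_rw [h2]
        rw [← Finset.sum_mul, geom_sum_eq (by norm_num : (2:ℝ) ≠ 1)]
        ring
      rw [h1]
      nlinarith [pow_pos (by norm_num : (0:ℝ) < 2) K]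
    have hsplit : ∀ j : ℕ, lam * (2 * Real.exp 1) + lam * C₂ * (1 + (2:ℝ)^(j+1) / 2^K * Real.exp s)
        = (lam * (2 * Real.exp 1) + lam * C₂) + lam * C₂ * Real.exp s * ((2:ℝ)^(j+1) / 2^K) := by
      intro j; ring
    simp_rw [hsplit]
    rw [Finset.sum_add_distrib, Finset.sum_const, Finset.card_range, ← Finset.mul_sum]
    have h7 : lam * C₂ * Real.exp s * (∑ j ∈ Finset.range K, (2:ℝ)^(j+1) / 2^K)
        ≤ lam * C₂ * Real.exp s * 2 := by
      apply mul_le_mul_of_nonneg_left hgeom (by positivity)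
    have h8 : (K : ℝ) ≥ 0 := by positivity
    calc (K : ℕ) • (lam * (2 * Real.exp 1) + lam * C₂)
          + lam * C₂ * Real.exp s * (∑ j ∈ Finset.range K, (2:ℝ)^(j+1) / 2^K)
        ≤ (K : ℝ) * (lam * (2 * Real.exp 1) + lam * C₂) + lam * C₂ * Real.exp s * 2 := by
          rw [nsmul_eq_mul]
          exact add_le_add le_rfl h7
      _ = lam * R := by rw [hR]; ring
  -- union bound
  set A := {ω | (n:ℝ) * dn < ∑ l ∈ Finset.range n, ξ l ω} with hA
  set V := {ω | (n:ℝ) * dn ≤ T ω} with hV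
  have hsub : A ⊆ (⋃ i ∈ Finset.range n, {ω | M < ξ i ω}) ∪ V := by
    intro ω hω
    by_cases hex : ∃ i ∈ Finset.range n, M < ξ i ω
    · left
      obtain ⟨i, hi, hMi⟩ := hex
      exact Set.mem_biUnion hi hMi
    · right
      push_neg at hex
      have hTω : T ω = ∑ l ∈ Finset.range n, ξ l ω :=
        Finset.sum_congr rfl fun i hi => min_eq_left (hex i hi)
      show (n:ℝ) * dn ≤ T ω
      rw [hTω]
      exact le_of_lt hω
  have hident_M : ∀ i, P {ω | M < ξ i ω} = P {ω | M < ξ 0 ω} := by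
    intro i
    have h1 : ∀ k : ℕ, P {ω | M < ξ k ω} = (P.map (ξ k)) (Set.Ioi M) := by
      intro k
      rw [Measure.map_apply (hmeas k) measurableSet_Ioi]
      rfl
    rw [h1 i, h1 0, hident i]
  have hPA : (P A).toReal ≤ (n:ℝ) * p M + (P V).toReal := by
    have h1 : P A ≤ (n:ℕ) • P {ω | M < ξ 0 ω} + P V := by
      refine (measure_mono hsub).trans ?_
      refine (measure_union_le _ _).trans ?_
      gcongr
      refine (measure_biUnion_finset_le _ _).trans ?_
      rw [Finset.sum_congr rfl fun i _ => hident_M i, Finset.sum_const, Finset.card_range]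
    have hne1 : (n:ℕ) • P {ω | M < ξ 0 ω} ≠ ⊤ := by
      rw [nsmul_eq_mul]
      exact ENNReal.mul_ne_top (by simp) (measure_ne_top P _)
    have h2 := ENNReal.toReal_mono
      (ENNReal.add_ne_top.2 ⟨hne1, measure_ne_top P V⟩) h1
    refine h2.trans (le_of_eq ?_)
    rw [ENNReal.toReal_add hne1 (measure_ne_top P V)]
    congr 1
    rw [nsmul_eq_mul, ENNReal.toReal_mul]
    simp [hp]
  -- first term
  have hterm1 : dn * ((n:ℝ) * p M) ≤ (1 + δ) / (1 - δ) := by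
    have h1 : p M ≤ (1 + δ) / M := htail1 M hMx₀
    have h2 : dn * ((n:ℝ) * p M) ≤ dn * ((n:ℝ) * ((1+δ)/M)) := by
      have := hp_nonneg M
      gcongr
    refine h2.trans (le_of_eq ?_)
    rw [hM]
    field_simp
  -- second term
  have hmgfY2 : ProbabilityTheory.mgf (Y 0) P lam ≤ Real.exp (lam * R) := by
    have h1 : ProbabilityTheory.mgf (Y 0) P lam ≤ 1 + lam * R := by
      refine hmgfY.trans ?_
      linarith [hsum_le]
    have h2 := Real.add_one_le_exp (lam * R)
    linarith
  have hmgfT : ProbabilityTheory.mgf T P lam ≤ Real.exp ((n:ℝ) * (lam * R)) := by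
    rw [hmgf_sum]
    rw [Finset.prod_congr rfl fun i _ => hmgf_ident i, Finset.prod_const, Finset.card_range]
    calc (ProbabilityTheory.mgf (Y 0) P lam)^n ≤ (Real.exp (lam * R))^n :=
        pow_le_pow_left₀ ProbabilityTheory.mgf_nonneg hmgfY2 n
      _ = Real.exp ((n:ℝ) * (lam * R)) := by
          rw [← Real.exp_nat_mul]
  have hterm2 : dn * (P V).toReal ≤ Real.exp (-((1 - δ/2)^2/(1 - δ) - 1) * Real.log dn) := by
    have h1 : (P V).toReal ≤ Real.exp (-lam * ((n:ℝ)*dn)) * Real.exp ((n:ℝ)*(lam*R)) := by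
      refine chernoff.trans ?_
      exact mul_le_mul_of_nonneg_left hmgfT (Real.exp_pos _).le
    rw [← Real.exp_add] at h1
    have hE : -lam * ((n:ℝ)*dn) + (n:ℝ)*(lam*R) = -(s/(1-δ)) * (1 - R/dn) := by
      rw [hlam, hM]
      field_simp
      ring
    have hE2 : -(s/(1-δ)) * (1 - R/dn) ≤ -((1-δ/2)^2/(1-δ)) * Real.log dn := by
      have h3 : 1 - δ/2 ≤ 1 - R/dn := by linarith
      have h4 : 0 ≤ s/(1-δ) := div_nonneg hs0 hδ'.le
      have h5 : -(s/(1-δ)) * (1 - R/dn) ≤ -(s/(1-δ)) * (1 - δ/2) := by nlinarith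
      refine h5.trans (le_of_eq ?_)
      rw [hs]
      field_simp
    calc dn * (P V).toReal ≤ dn * Real.exp (-(s/(1-δ)) * (1 - R/dn)) := by
          rw [← hE]
          exact mul_le_mul_of_nonneg_left h1 hdn0.le
      _ ≤ dn * Real.exp (-((1-δ/2)^2/(1-δ)) * Real.log dn) := by
          exact mul_le_mul_of_nonneg_left (Real.exp_le_exp.2 hE2) hdn0.le
      _ = Real.exp (Real.log dn + -((1-δ/2)^2/(1-δ)) * Real.log dn) := by
          rw [Real.exp_add, Real.exp_log hdn0]
      _ = Real.exp (-((1 - δ/2)^2/(1 - δ) - 1) * Real.log dn) := by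
          ring_nf
  calc dn * (P A).toReal ≤ dn * ((n:ℝ) * p M) + dn * (P V).toReal := by
        rw [← mul_add]
        exact mul_le_mul_of_nonneg_left hPA hdn0.le
    _ ≤ (1+δ)/(1-δ) + Real.exp (-((1 - δ/2)^2/(1 - δ) - 1) * Real.log dn) :=
        add_le_add hterm1 hterm2


/-- For i.i.d. nonnegative `ξ₁, ξ₂, …` with tail `x · P(ξ > x) → 1`
(the case `γ = 1`), and any positive sequence `d_n` with `(log n)/d_n → 0`, one has
`limsup_n d_n · P(S_n > n d_n) ≤ 1`. -/
theorem statement2 {Ω : Type*} [MeasurableSpace Ω] (P : Measure Ω) [IsProbabilityMeasure P]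
    (ξ : ℕ → Ω → ℝ) (hmeas : ∀ n, Measurable (ξ n))
    (hnonneg : ∀ n ω, 0 ≤ ξ n ω)
    (hindep : ProbabilityTheory.iIndepFun ξ P)
    (hident : ∀ n, P.map (ξ n) = P.map (ξ 0))
    (htail : Tendsto (fun x : ℝ => x * (P {ω | x < ξ 0 ω}).toReal) atTop (nhds 1))
    (d : ℕ → ℝ) (hdpos : ∀ n, 0 < d n)
    (hdlog : Tendsto (fun n : ℕ => Real.log n / d n) atTop (nhds 0)) :
    limsup (fun n : ℕ =>
        d n * (P {ω | (n : ℝ) * d n < ∑ l ∈ Finset.range n, ξ l ω}).toReal) atTop ≤ 1 := by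
  have main : ∀ ε : ℝ, 0 < ε → ε ≤ 1 → ∀ᶠ n : ℕ in atTop,
      d n * (P {ω | (n : ℝ) * d n < ∑ l ∈ Finset.range n, ξ l ω}).toReal ≤ 1 + ε := by
    intro ε hε hε1
    set δ := ε/8 with hδdef
    have hδ0 : 0 < δ := by positivity
    have hδ1 : δ ≤ 1/8 := by rw [hδdef]; linarith
    -- tail threshold
    have htail' : ∀ᶠ x : ℝ in atTop, x * (P {ω | x < ξ 0 ω}).toReal ≤ 1 + δ :=
      htail.eventually (eventually_le_nhds (by linarith : (1:ℝ) < 1 + δ))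
    obtain ⟨x₁, hx₁⟩ := eventually_atTop.mp htail'
    set x₀ := max x₁ 1 with hx₀def
    have hx₀1 : (1:ℝ) ≤ x₀ := le_max_right _ _
    have htail1 : ∀ x, x₀ ≤ x → (P {ω | x < ξ 0 ω}).toReal ≤ (1 + δ) / x := by
      intro x hx
      have hx0 : (0:ℝ) < x := lt_of_lt_of_le one_pos (hx₀1.trans hx)
      have h1 := hx₁ x ((le_max_left _ _).trans hx)
      rw [le_div_iff₀ hx0, mul_comm]
      exact h1
    set C₂ := max x₀ (1 + δ) with hC₂def
    have hC₂pos : (0:ℝ) < C₂ := lt_of_lt_of_le one_pos (hx₀1.trans (le_max_left _ _))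
    set θ := (1 - δ/2)^2/(1 - δ) - 1 with hθdef
    have hθpos : 0 < θ := by
      have h1 : (0:ℝ) < 1 - δ := by linarith
      have h2 : (1 - δ) < (1 - δ/2)^2 := by nlinarith
      have h3 := (one_lt_div h1).2 h2
      rw [hθdef]; linarith
    -- basic limits
    have hlogn : Tendsto (fun n : ℕ => Real.log n) atTop atTop :=
      Real.tendsto_log_atTop.comp tendsto_natCast_atTop_atTop
    have hd_ge_log : ∀ᶠ n : ℕ in atTop, Real.log n ≤ d n := by
      have h1 := hdlog.eventually (eventually_le_nhds (by norm_num : (0:ℝ) < 1))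
      filter_upwards [h1] with n hn
      exact (div_le_one (hdpos n)).mp hn
    have hdtop : Tendsto d atTop atTop := tendsto_atTop_mono' atTop hd_ge_log hlogn
    have hlogd : Tendsto (fun n : ℕ => Real.log (d n)) atTop atTop :=
      Real.tendsto_log_atTop.comp hdtop
    have hlogd_div : Tendsto (fun n : ℕ => Real.log (d n) / d n) atTop (nhds 0) :=
      Real.isLittleO_log_id_atTop.tendsto_div_nhds_zero.comp hdtop
    have hinv : Tendsto (fun n : ℕ => 1 / d n) atTop (nhds 0) := by
      simpa [one_div, Function.comp_def] using tendsto_inv_atTop_zero.comp hdtop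
    have hMtop : Tendsto (fun n : ℕ => (1 - δ) * ((n:ℝ) * d n)) atTop atTop := by
      apply tendsto_atTop_mono' atTop ?_ (hdtop.const_mul_atTop (by linarith : (0:ℝ) < 1 - δ))
      filter_upwards [eventually_ge_atTop 1] with n hn
      have h2 : (1:ℝ) ≤ (n:ℝ) := by exact_mod_cast hn
      have h3 := hdpos n
      nlinarith [mul_nonneg (mul_nonneg (by linarith : (0:ℝ) ≤ 1 - δ)
        (by linarith : (0:ℝ) ≤ (n:ℝ) - 1)) h3.le]
    have hexps_div : Tendsto
        (fun n : ℕ => Real.exp ((1 - δ/2) * Real.log (d n)) / d n) atTop (nhds 0) := by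
      have h1 : Tendsto (fun n : ℕ => -(δ/2) * Real.log (d n)) atTop atBot :=
        (tendsto_const_mul_atBot_of_neg (by linarith : -(δ/2) < (0:ℝ))).2 hlogd
      have h2 := Real.tendsto_exp_atBot.comp h1
      apply h2.congr
      intro n
      have hL : Real.exp (Real.log (d n)) = d n := Real.exp_log (hdpos n)
      show Real.exp (-(δ/2) * Real.log (d n))
          = Real.exp ((1 - δ/2) * Real.log (d n)) / d n
      have h3 : Real.exp ((1 - δ/2) * Real.log (d n)) / d n
          = Real.exp ((1 - δ/2) * Real.log (d n)) / Real.exp (Real.log (d n)) := by rw [hL]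
      rw [h3, ← Real.exp_sub]
      congr 1
      ring
    have hexp_theta : Tendsto (fun n : ℕ => Real.exp (-θ * Real.log (d n))) atTop (nhds 0) := by
      have h1 : Tendsto (fun n : ℕ => -θ * Real.log (d n)) atTop atBot :=
        (tendsto_const_mul_atBot_of_neg (by linarith : -θ < (0:ℝ))).2 hlogd
      exact Real.tendsto_exp_atBot.comp h1
    -- K / d → 0
    have hK_div : Tendsto
        (fun n : ℕ => (Nat.clog 2 ⌈(1 - δ) * ((n:ℝ) * d n)⌉₊ : ℝ) / d n) atTop (nhds 0) := by
      have hg0 : Tendsto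
          (fun n : ℕ => (1 + 2*(Real.log 2 + Real.log n + Real.log (d n))) / d n)
          atTop (nhds 0) := by
        have h1 : Tendsto (fun n : ℕ => (1 + 2*Real.log 2) * (1 / d n)
            + (2 * (Real.log n / d n) + 2 * (Real.log (d n) / d n))) atTop (nhds 0) := by
          have := (hinv.const_mul (1 + 2*Real.log 2)).add
            ((hdlog.const_mul 2).add (hlogd_div.const_mul 2))
          simpa using this
        apply h1.congr
        intro n
        field_simp
        ring
      apply squeeze_zero' ?_ ?_ hg0
      · filter_upwards with n
        exact div_nonneg (by positivity) (hdpos n).le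
      · filter_upwards [hMtop.eventually_ge_atTop 2, eventually_ge_atTop 1,
          hdtop.eventually_ge_atTop 1] with n hM2 hn1 hd1
        set M := (1 - δ) * ((n:ℝ) * d n) with hMdef
        set K := Nat.clog 2 ⌈M⌉₊ with hKdef
        have hn0 : (1:ℝ) ≤ (n:ℝ) := by exact_mod_cast hn1
        have hdn0 := hdpos n
        have hM0 : (0:ℝ) < M := by linarith
        have hceil2 : 2 ≤ ⌈M⌉₊ := by
          have h1 : ((2:ℕ):ℝ) ≤ M := by exact_mod_cast hM2
          have h2 := Nat.ceil_mono h1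
          simpa using h2
        have hK1 : 1 ≤ K := by rw [hKdef]; exact Nat.clog_pos one_lt_two hceil2
        have hpow : ((2:ℕ)^(K - 1) : ℕ) < ⌈M⌉₊ := by
          rw [hKdef]; exact Nat.pow_pred_clog_lt_self one_lt_two (by omega)
        have hpowR : (2:ℝ)^(K - 1) < M + 1 := by
          have h1 : ((2^(K-1) : ℕ) : ℝ) < (⌈M⌉₊ : ℝ) := by exact_mod_cast hpow
          have h2 : (⌈M⌉₊ : ℝ) < M + 1 := Nat.ceil_lt_add_one hM0.le
          push_cast at h1
          linarith
        have hlogle : ((K:ℝ) - 1) * Real.log 2 ≤ Real.log (M + 1) := by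
          have h1 : Real.log ((2:ℝ)^(K-1)) ≤ Real.log (M + 1) :=
            Real.log_le_log (by positivity) hpowR.le
          rw [Real.log_pow] at h1
          have h2 : (((K - 1 : ℕ)):ℝ) = (K:ℝ) - 1 := by
            rw [Nat.cast_sub hK1]
            norm_num
          rw [h2] at h1
          exact h1
        have hlog2 : (1/2:ℝ) < Real.log 2 := by
          have := Real.log_two_gt_d9
          linarith
        have hlogM1 : (0:ℝ) ≤ Real.log (M + 1) := Real.log_nonneg (by linarith)
        have hKle : (K:ℝ) ≤ 1 + 2 * Real.log (M + 1) := by nlinarith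
        have hM1le : M + 1 ≤ 2 * ((n:ℝ) * d n) := by nlinarith
        have hlogM2 : Real.log (M + 1) ≤ Real.log 2 + Real.log n + Real.log (d n) := by
          have h1 : Real.log (M + 1) ≤ Real.log (2 * ((n:ℝ) * d n)) :=
            Real.log_le_log (by linarith) hM1le
          rw [Real.log_mul (by norm_num) (by positivity), Real.log_mul (by positivity)
            (hdpos n).ne'] at h1
          linarith
        have hnum : (K:ℝ) ≤ 1 + 2*(Real.log 2 + Real.log n + Real.log (d n)) := by linarith
        have hdiv : (K:ℝ)/d n ≤ (1 + 2*(Real.log 2 + Real.log n + Real.log (d n)))/d n := by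
          gcongr
        exact hdiv
    -- R / d → 0
    have hR_div : Tendsto (fun n : ℕ =>
        ((2*Real.exp 1 + C₂) * (Nat.clog 2 ⌈(1-δ)*((n:ℝ)*d n)⌉₊ : ℝ)
          + 2*C₂*Real.exp ((1-δ/2)*Real.log (d n))) / d n) atTop (nhds 0) := by
      have h1 := (hK_div.const_mul (2*Real.exp 1 + C₂)).add (hexps_div.const_mul (2*C₂))
      have h2 : Tendsto (fun n : ℕ =>
          (2*Real.exp 1 + C₂) * ((Nat.clog 2 ⌈(1-δ)*((n:ℝ)*d n)⌉₊ : ℝ) / d n)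
            + 2*C₂ * (Real.exp ((1-δ/2)*Real.log (d n)) / d n)) atTop (nhds 0) := by
        simpa using h1
      apply h2.congr
      intro n
      rw [add_div, mul_div_assoc, mul_div_assoc]
    -- lam → 0
    have hlam_t : Tendsto (fun n : ℕ =>
        (1-δ/2)*Real.log (d n) / ((1-δ)*((n:ℝ)*d n))) atTop (nhds 0) := by
      have hq : Tendsto (fun n : ℕ =>
          ((1-δ/2)/(1-δ)) * (Real.log (d n) / d n)) atTop (nhds 0) := by
        simpa using hlogd_div.const_mul ((1-δ/2)/(1-δ))
      apply squeeze_zero' ?_ ?_ hq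
      · filter_upwards [hdtop.eventually_ge_atTop 1, eventually_ge_atTop 1] with n hd1 hn1
        have hn0 : (1:ℝ) ≤ (n:ℝ) := by exact_mod_cast hn1
        have := hdpos n
        apply div_nonneg (mul_nonneg (by linarith) (Real.log_nonneg hd1))
        nlinarith [mul_nonneg (by linarith : (0:ℝ) ≤ (n:ℝ)) this.le]
      · filter_upwards [hdtop.eventually_ge_atTop 1, eventually_ge_atTop 1] with n hd1 hn1
        have hn0 : (1:ℝ) ≤ (n:ℝ) := by exact_mod_cast hn1
        have hdn := hdpos n
        have heq : ((1-δ/2)/(1-δ)) * (Real.log (d n) / d n)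
            = (1-δ/2)*Real.log (d n) / ((1-δ)*d n) := div_mul_div_comm _ _ _ _
        rw [heq]
        have hb : (0:ℝ) < (1-δ)*d n := mul_pos (by linarith) hdn
        have hbc : (1-δ)*d n ≤ (1-δ)*((n:ℝ)*d n) := by
          have h9 : d n ≤ (n:ℝ)*d n := by nlinarith [mul_le_mul_of_nonneg_right hn0 hdn.le]
          nlinarith [mul_le_mul_of_nonneg_left h9 (by linarith : (0:ℝ) ≤ 1-δ)]
        exact div_le_div_of_nonneg_left (mul_nonneg (by linarith) (Real.log_nonneg hd1)) hb hbc
    -- collect eventualities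
    have hev_lam : ∀ᶠ n : ℕ in atTop,
        (1-δ/2)*Real.log (d n)/((1-δ)*((n:ℝ)*d n)) ≤ 1/2 :=
      hlam_t.eventually (eventually_le_nhds (by norm_num))
    have hev_R : ∀ᶠ n : ℕ in atTop,
        ((2*Real.exp 1 + C₂) * (Nat.clog 2 ⌈(1-δ)*((n:ℝ)*d n)⌉₊ : ℝ)
          + 2*C₂*Real.exp ((1-δ/2)*Real.log (d n))) / d n ≤ δ/2 :=
      hR_div.eventually (eventually_le_nhds (by positivity))
    have hev_exp : ∀ᶠ n : ℕ in atTop, Real.exp (-θ * Real.log (d n)) ≤ ε/2 :=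
      hexp_theta.eventually (eventually_le_nhds (by positivity))
    filter_upwards [eventually_ge_atTop 1, hdtop.eventually_ge_atTop 1,
      hMtop.eventually_ge_atTop (max x₀ 2), hev_lam, hev_R, hev_exp] with n hn1 hd1 hM hlam2 hRd hexp
    have key := key_bound P ξ hmeas hnonneg hindep hident δ x₀ C₂ hδ0 hδ1 hx₀1 hC₂def htail1
      n hn1 (d n) hd1 ((1-δ)*((n:ℝ)*d n)) ((1-δ/2)*Real.log (d n))
      ((1-δ/2)*Real.log (d n)/((1-δ)*((n:ℝ)*d n)))
      ((2*Real.exp 1 + C₂) * (Nat.clog 2 ⌈(1-δ)*((n:ℝ)*d n)⌉₊ : ℝ)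
        + 2*C₂*Real.exp ((1-δ/2)*Real.log (d n)))
      (Nat.clog 2 ⌈(1-δ)*((n:ℝ)*d n)⌉₊)
      rfl rfl rfl rfl rfl (le_trans (le_max_right _ _) hM) (le_trans (le_max_left _ _) hM)
      hlam2 hRd
    have hnum2 : (1+δ)/(1-δ) ≤ 1 + ε/2 := by
      rw [div_le_iff₀ (by linarith : (0:ℝ) < 1 - δ)]
      nlinarith
    rw [hθdef] at hexp
    linarith [key, hexp, hnum2]
  apply le_of_forall_pos_le_add
  intro ε hε
  have hε' : 0 < min ε 1 := lt_min hε one_pos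
  have hev := main (min ε 1) hε' (min_le_right _ _)
  have hev2 : ∀ᶠ n : ℕ in atTop,
      d n * (P {ω | (n : ℝ) * d n < ∑ l ∈ Finset.range n, ξ l ω}).toReal ≤ 1 + ε := by
    filter_upwards [hev] with n h
    have h2 : min ε 1 ≤ ε := min_le_left ε 1
    linarith
  refine limsup_le_of_le ?_ hev2
  refine isCoboundedUnder_le_of_le atTop (x := 0) ?_
  intro i
  exact mul_nonneg (hdpos i).le ENNReal.toReal_nonneg
end

section
/- There exists a constant c_γ > 0 (one may take c_γ = (10 − 8γ)·(2 − 2γ)^{1/(1−γ)}) such that for every sequence (c_n) of positive reals with c_n → 0 and n^{1/γ − 1} c_n → ∞, one has P(S_n ≤ c_n n^{1/γ}) ≤ 2 · exp(− c_n^{−γ/(1−γ)} / c_γ) for all sufficiently large n. -/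
open MeasureTheory Filter

set_option maxHeartbeats 1000000 in
/-- For i.i.d. nonnegative `ξ₁, ξ₂, …` with tail `x^γ · P(ξ > x) → 1`,
`γ ∈ (0,1)`, there is a constant `c_γ > 0` such that for every positive sequence `c_n`
with `c_n → 0` and `n^{1/γ-1} c_n → ∞`, for all sufficiently large `n`,
`P(S_n ≤ c_n n^{1/γ}) ≤ 2 exp(− c_n^{−γ/(1−γ)} / c_γ)`. -/
theorem statement3 {Ω : Type*} [MeasurableSpace Ω] (P : Measure Ω) [IsProbabilityMeasure P]
    (γ : ℝ) (hγ : γ ∈ Set.Ioo (0 : ℝ) 1)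
    (ξ : ℕ → Ω → ℝ) (hmeas : ∀ n, Measurable (ξ n))
    (hnonneg : ∀ n ω, 0 ≤ ξ n ω)
    (hindep : ProbabilityTheory.iIndepFun ξ P)
    (hident : ∀ n, P.map (ξ n) = P.map (ξ 0))
    (htail : Tendsto (fun x : ℝ => x ^ γ * (P {ω | x < ξ 0 ω}).toReal) atTop (nhds 1)) :
    ∃ cγ > (0 : ℝ), ∀ c : ℕ → ℝ, (∀ n, 0 < c n) →
      Tendsto c atTop (nhds 0) →
      Tendsto (fun n : ℕ => (n : ℝ) ^ (1 / γ - 1) * c n) atTop atTop →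
      ∀ᶠ n : ℕ in atTop,
        (P {ω | ∑ l ∈ Finset.range n, ξ l ω ≤ c n * (n : ℝ) ^ (1 / γ)}).toReal ≤
          2 * Real.exp (-((c n) ^ (-(γ / (1 - γ))) / cγ)) := by
  obtain ⟨hγ0, hγ1⟩ := hγ
  have h1γ : (0:ℝ) < 1 - γ := by linarith
  set q : ℝ := 1/(1-γ) with hq
  have hq0 : 0 < q := by positivity
  have h8 : (0:ℝ) < 8 := by norm_num
  refine ⟨(8:ℝ) ^ q, Real.rpow_pos_of_pos h8 q, ?_⟩
  set cγ : ℝ := (8:ℝ) ^ q with hcγ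
  have hcγ0 : 0 < cγ := Real.rpow_pos_of_pos h8 q
  set K : ℝ := (8:ℝ) ^ (-q) with hK
  have hK0 : 0 < K := Real.rpow_pos_of_pos h8 _
  have hKcγ : K = cγ⁻¹ := by rw [hK, hcγ, Real.rpow_neg h8.le]
  have hKγ : (1/4 : ℝ) * K ^ γ = 2 * K := by
    rw [hK, ← Real.rpow_mul h8.le]
    have he : -q * γ = 1 + (-q) := by
      rw [hq]; field_simp; ring
    rw [he, Real.rpow_add h8, Real.rpow_one]; ring
  intro c hc hc0 hblow
  -- eventual tail lower bound
  obtain ⟨x₀, hx₀⟩ := eventually_atTop.mp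
    (htail.eventually (eventually_ge_nhds (by norm_num : (1/2 : ℝ) < 1)))
  set M : ℝ := max x₀ 1 with hM
  have hM0 : (0:ℝ) < M := lt_of_lt_of_le one_pos (le_max_right _ _)
  -- the lambda sequence
  set lam : ℕ → ℝ := fun n => K * (c n) ^ (-q) * (n:ℝ) ^ (-(1/γ)) with hlam
  have hlampos : ∀ n : ℕ, 0 < n → 0 < lam n := by
    intro n hn
    have : (0:ℝ) < n := by exact_mod_cast hn
    exact mul_pos (mul_pos hK0 (Real.rpow_pos_of_pos (hc n) _)) (Real.rpow_pos_of_pos this _)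
  have hlamlim : Tendsto lam atTop (nhds 0) := by
    have h1 : Tendsto (fun n : ℕ => K * ((n:ℝ) ^ (1/γ - 1) * c n) ^ (-q)) atTop
        (nhds (K * 0)) := ((tendsto_rpow_neg_atTop hq0).comp hblow).const_mul K
    rw [mul_zero] at h1
    refine Tendsto.congr' ?_ h1
    filter_upwards [eventually_ge_atTop 1] with n hn
    have hn0 : (0:ℝ) < n := by exact_mod_cast hn
    rw [Real.mul_rpow (Real.rpow_nonneg hn0.le _) (hc n).le,
      ← Real.rpow_mul hn0.le]
    have he : (1/γ - 1) * (-q) = -(1/γ) := by rw [hq]; field_simp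
    rw [he]; ring
  have hev : ∀ᶠ n : ℕ in atTop, lam n ≤ M⁻¹ :=
    hlamlim.eventually (eventually_le_nhds (by positivity))
  filter_upwards [hev, eventually_ge_atTop 1] with n hlamle hn1
  have hnR : (0:ℝ) < n := by exact_mod_cast hn1
  have hl0 : 0 < lam n := hlampos n hn1
  set t : ℝ := -(lam n) with ht
  have ht0 : t ≤ 0 := by simp [ht, hl0.le]
  -- 1/lam n is ≥ x₀
  have hMinv : M ≤ (lam n)⁻¹ := by
    have := (inv_le_inv₀ (by positivity) hl0).mpr hlamle
    rwa [inv_inv] at this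
  set x : ℝ := (lam n)⁻¹ with hx
  have hxx₀ : x₀ ≤ x := le_trans (le_max_left _ _) hMinv
  set τ : ℝ := (P {ω | x < ξ 0 ω}).toReal with hτ
  have hpγ : 0 < lam n ^ γ := Real.rpow_pos_of_pos hl0 _
  have htau : (1/2 : ℝ) * lam n ^ γ ≤ τ := by
    have h := hx₀ x hxx₀
    have hxγ : x ^ γ = (lam n ^ γ)⁻¹ := by rw [hx, Real.inv_rpow hl0.le]
    rw [hxγ, ← hτ] at h
    nlinarith [mul_le_mul_of_nonneg_left h hpγ.le, mul_inv_cancel₀ hpγ.ne']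
  -- integrability helper
  have hbdd : ∀ (f : Ω → ℝ), Measurable f → (∀ ω, ‖f ω‖ ≤ 1) → Integrable f P :=
    fun f hf hb => (integrable_const 1).mono' hf.aestronglyMeasurable (Eventually.of_forall hb)
  have hintξ : ∀ i : ℕ, Integrable (fun ω => Real.exp (t * ξ i ω)) P := by
    intro i
    refine hbdd _ (((hmeas i).const_mul t).exp) fun ω => ?_
    rw [Real.norm_eq_abs, abs_of_pos (Real.exp_pos _)]
    exact Real.exp_le_one_iff.mpr (mul_nonpos_of_nonpos_of_nonneg ht0 (hnonneg i ω))
  -- lower bound on ∫ (1 - exp(t ξ₀))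
  have hA : MeasurableSet {ω | x < ξ 0 ω} := measurableSet_lt measurable_const (hmeas 0)
  have hI : (1/4 : ℝ) * lam n ^ γ ≤ ∫ ω, (1 - Real.exp (t * ξ 0 ω)) ∂P := by
    have hmono : ∀ ω, Set.indicator {ω | x < ξ 0 ω} (fun _ => (1/2:ℝ)) ω ≤
        1 - Real.exp (t * ξ 0 ω) := by
      intro ω
      by_cases hω : ω ∈ {ω | x < ξ 0 ω}
      · rw [Set.indicator_of_mem hω]
        have hξx : x < ξ 0 ω := hω
        have h1 : t * ξ 0 ω ≤ -1 := by
          have : 1 ≤ lam n * ξ 0 ω := by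
            have := mul_le_mul_of_nonneg_left hξx.le hl0.le
            rwa [hx, mul_inv_cancel₀ hl0.ne'] at this
          rw [ht]; nlinarith
        have h2 : Real.exp (t * ξ 0 ω) ≤ Real.exp (-1) := Real.exp_le_exp.mpr h1
        have h3 : Real.exp (-1) ≤ 1/2 := by
          rw [Real.exp_neg]
          have h4 : (2:ℝ) ≤ Real.exp 1 := by linarith [Real.add_one_le_exp 1]
          nlinarith [mul_inv_cancel₀ (Real.exp_pos 1).ne', Real.exp_pos 1,
            inv_nonneg.mpr (Real.exp_pos 1).le]
        linarith
      · rw [Set.indicator_of_notMem hω]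
        have : Real.exp (t * ξ 0 ω) ≤ 1 :=
          Real.exp_le_one_iff.mpr (mul_nonpos_of_nonpos_of_nonneg ht0 (hnonneg 0 ω))
        linarith
    have hint1 : Integrable ({ω | x < ξ 0 ω}.indicator (fun _ => (1/2:ℝ))) P :=
      (integrable_const (1/2 : ℝ)).indicator hA
    have hint2 : Integrable (fun ω => 1 - Real.exp (t * ξ 0 ω)) P :=
      (integrable_const 1).sub (hintξ 0)
    have hle := integral_mono hint1 hint2 hmono
    rw [integral_indicator_const _ hA, smul_eq_mul] at hle
    calc (1/4 : ℝ) * lam n ^ γ = (1/2) * ((1/2) * lam n ^ γ) := by ring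
    _ ≤ (1/2) * τ := by linarith [htau]
    _ = (P {ω | x < ξ 0 ω}).toReal * (1/2) := by rw [hτ]; ring
    _ ≤ _ := hle
  -- mgf bound for ξ 0
  have hmgf0 : ProbabilityTheory.mgf (ξ 0) P t ≤ Real.exp (-((1/4 : ℝ) * lam n ^ γ)) := by
    have heq : ProbabilityTheory.mgf (ξ 0) P t =
        1 - ∫ ω, (1 - Real.exp (t * ξ 0 ω)) ∂P := by
      rw [ProbabilityTheory.mgf, integral_sub (integrable_const 1) (hintξ 0), integral_const,
        probReal_univ, smul_eq_mul, one_mul]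
      ring
    rw [heq]
    have := Real.add_one_le_exp (-((1/4 : ℝ) * lam n ^ γ))
    linarith
  -- identical distribution: equal mgf
  have hmgfi : ∀ i : ℕ, ProbabilityTheory.mgf (ξ i) P t = ProbabilityTheory.mgf (ξ 0) P t := by
    have hcont : ∀ j : ℕ, ProbabilityTheory.mgf (ξ j) P t =
        ∫ y, Real.exp (t * y) ∂(P.map (ξ j)) := by
      intro j
      rw [ProbabilityTheory.mgf]
      exact (integral_map (hmeas j).aemeasurable
        ((measurable_id.const_mul t).exp).aestronglyMeasurable).symm
    intro i
    rw [hcont i, hcont 0, hident i]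
  -- Chernoff bound
  have hsumEq : (∑ l ∈ Finset.range n, ξ l) = fun ω => ∑ l ∈ Finset.range n, ξ l ω := by
    funext ω; exact Finset.sum_apply ω (Finset.range n) ξ
  have hintS : Integrable (fun ω => Real.exp (t * (∑ l ∈ Finset.range n, ξ l) ω)) P := by
    rw [hsumEq]
    refine hbdd _ ((Finset.measurable_sum _ fun l _ => hmeas l).const_mul t).exp fun ω => ?_
    rw [Real.norm_eq_abs, abs_of_pos (Real.exp_pos _)]
    exact Real.exp_le_one_iff.mpr (mul_nonpos_of_nonpos_of_nonneg ht0
      (Finset.sum_nonneg fun l _ => hnonneg l ω))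
  have hS := ProbabilityTheory.measure_le_le_exp_mul_mgf (μ := P)
    (X := ∑ l ∈ Finset.range n, ξ l) (c n * (n:ℝ) ^ (1/γ)) ht0 hintS
  rw [hindep.mgf_sum hmeas] at hS
  have hprod : ∏ i ∈ Finset.range n, ProbabilityTheory.mgf (ξ i) P t =
      (ProbabilityTheory.mgf (ξ 0) P t) ^ n := by
    rw [Finset.prod_congr rfl fun i _ => hmgfi i, Finset.prod_const, Finset.card_range]
  rw [hprod] at hS
  have hsetEq : {ω | ∑ l ∈ Finset.range n, ξ l ω ≤ c n * (n:ℝ) ^ (1/γ)} =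
      {ω | (∑ l ∈ Finset.range n, ξ l) ω ≤ c n * (n:ℝ) ^ (1/γ)} := by
    simp [Finset.sum_apply]
  rw [hsetEq]
  -- chain of inequalities
  have hpow : (ProbabilityTheory.mgf (ξ 0) P t) ^ n ≤
      (Real.exp (-((1/4 : ℝ) * lam n ^ γ))) ^ n :=
    pow_le_pow_left₀ ProbabilityTheory.mgf_nonneg hmgf0 n
  have hchain : (P {ω | (∑ l ∈ Finset.range n, ξ l) ω ≤ c n * (n:ℝ) ^ (1/γ)}).toReal ≤
      Real.exp (lam n * (c n * (n:ℝ) ^ (1/γ)) + (n:ℝ) * (-((1/4 : ℝ) * lam n ^ γ))) := by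
    calc (P {ω | (∑ l ∈ Finset.range n, ξ l) ω ≤ c n * (n:ℝ) ^ (1/γ)}).toReal ≤
        Real.exp (-t * (c n * (n:ℝ) ^ (1/γ))) * (ProbabilityTheory.mgf (ξ 0) P t) ^ n := hS
    _ ≤ Real.exp (-t * (c n * (n:ℝ) ^ (1/γ))) * (Real.exp (-((1/4 : ℝ) * lam n ^ γ))) ^ n := by
        exact mul_le_mul_of_nonneg_left hpow (Real.exp_pos _).le
    _ = Real.exp (lam n * (c n * (n:ℝ) ^ (1/γ)) + (n:ℝ) * (-((1/4 : ℝ) * lam n ^ γ))) := by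
        rw [← Real.exp_nat_mul, ← Real.exp_add, ht, neg_neg]
  -- final arithmetic on the exponent
  have harith : lam n * (c n * (n:ℝ) ^ (1/γ)) + (n:ℝ) * (-((1/4 : ℝ) * lam n ^ γ)) =
      -((c n) ^ (-(γ / (1 - γ))) / cγ) := by
    have hcn := hc n
    have hlamγ : lam n ^ γ = K ^ γ * (c n) ^ (-(γ/(1-γ))) * ((n:ℝ))⁻¹ := by
      rw [hlam]
      rw [Real.mul_rpow (mul_nonneg hK0.le (Real.rpow_nonneg hcn.le _))
        (Real.rpow_nonneg hnR.le _),
        Real.mul_rpow hK0.le (Real.rpow_nonneg hcn.le _),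
        ← Real.rpow_mul hcn.le, ← Real.rpow_mul hnR.le]
      have e1 : -q * γ = -(γ/(1-γ)) := by rw [hq]; field_simp
      have e2 : -(1/γ) * γ = -1 := by field_simp
      rw [e1, e2, Real.rpow_neg_one]
    have hlamA : lam n * (c n * (n:ℝ) ^ (1/γ)) = K * (c n) ^ (-(γ/(1-γ))) := by
      rw [hlam]
      have : K * (c n) ^ (-q) * (n:ℝ) ^ (-(1/γ)) * (c n * (n:ℝ) ^ (1/γ)) =
          K * ((c n) ^ (-q) * (c n) ^ (1:ℝ)) * ((n:ℝ) ^ (-(1/γ)) * (n:ℝ) ^ (1/γ)) := by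
        rw [Real.rpow_one]; ring
      rw [this, ← Real.rpow_add hcn, ← Real.rpow_add hnR]
      have e1 : -q + 1 = -(γ/(1-γ)) := by rw [hq]; field_simp; ring
      have e2 : -(1/γ) + 1/γ = 0 := by ring
      rw [e1, e2, Real.rpow_zero, mul_one]
    rw [hlamA, hlamγ, hKcγ]
    have hKγ' : (1/4 : ℝ) * K ^ γ = 2 * K := hKγ
    rw [hKcγ] at hKγ'
    have hninv : (n:ℝ) * ((n:ℝ))⁻¹ = 1 := mul_inv_cancel₀ hnR.ne'
    linear_combination (-((c n) ^ (-(γ/(1-γ))) * (n:ℝ) * ((n:ℝ))⁻¹)) * hKγ' +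
      (-(2 * cγ⁻¹ * (c n) ^ (-(γ/(1-γ))))) * hninv
  rw [harith] at hchain
  calc (P {ω | (∑ l ∈ Finset.range n, ξ l) ω ≤ c n * (n:ℝ) ^ (1/γ)}).toReal ≤
      Real.exp (-((c n) ^ (-(γ / (1 - γ))) / cγ)) := hchain
  _ ≤ 2 * Real.exp (-((c n) ^ (-(γ / (1 - γ))) / cγ)) := by
      nlinarith [Real.exp_pos (-((c n) ^ (-(γ / (1 - γ))) / cγ))]
end

section
/- Let (c_n) be a sequence of positive reals such that sup_n n^{1/γ − 1} c_n < L for some constant L > 0. Then there exists a constant c > 0 such that P(S_n ≤ c_n n^{1/γ}) ≤ exp(−c·n) for all sufficiently large n. -/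
open MeasureTheory Filter Real ProbabilityTheory

lemma aux_exp_le (x : ℝ) (h0 : 0 ≤ x) (h1 : x ≤ 1) : Real.exp (-x) ≤ 1 - x / 2 := by
  have h2 : Real.exp (-x) ≤ 1 / (1 + x) := by
    rw [Real.exp_neg, one_div]
    apply inv_anti₀ (by linarith)
    linarith [Real.add_one_le_exp x]
  refine h2.trans ?_
  rw [div_le_iff₀ (by linarith)]
  nlinarith

/-- For i.i.d. nonnegative `ξ₁, ξ₂, …` with tail `x^γ · P(ξ > x) → 1`,
`γ ∈ (0,1]`, and any positive sequence `c_n` with `sup_n n^{1/γ-1} c_n < L` for some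
`L > 0`, there is a constant `c > 0` such that for all sufficiently large `n`,
`P(S_n ≤ c_n n^{1/γ}) ≤ exp(−c·n)`. -/
theorem statement4 {Ω : Type*} [MeasurableSpace Ω] (P : Measure Ω) [IsProbabilityMeasure P]
    (γ : ℝ) (hγ : γ ∈ Set.Ioc (0 : ℝ) 1)
    (ξ : ℕ → Ω → ℝ) (hmeas : ∀ n, Measurable (ξ n))
    (hnonneg : ∀ n ω, 0 ≤ ξ n ω)
    (hindep : ProbabilityTheory.iIndepFun ξ P)
    (hident : ∀ n, P.map (ξ n) = P.map (ξ 0))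
    (htail : Tendsto (fun x : ℝ => x ^ γ * (P {ω | x < ξ 0 ω}).toReal) atTop (nhds 1))
    (c' : ℕ → ℝ) (hc'pos : ∀ n, 0 < c' n)
    (L : ℝ) (hL : 0 < L) (hsup : ∀ n : ℕ, (n : ℝ) ^ (1 / γ - 1) * c' n < L) :
    ∃ c > (0 : ℝ), ∀ᶠ n : ℕ in atTop,
      (P {ω | ∑ l ∈ Finset.range n, ξ l ω ≤ c' n * (n : ℝ) ^ (1 / γ)}).toReal ≤
        Real.exp (-(c * n)) := by
  obtain ⟨hγ0, hγ1⟩ := hγ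
  -- Step A : eventual tail lower bound
  have hA : ∀ᶠ x : ℝ in atTop, (1:ℝ)/2 ≤ x ^ γ * (P {ω | x < ξ 0 ω}).toReal :=
    htail.eventually (eventually_ge_nhds (by norm_num))
  obtain ⟨x₀', hx₀'⟩ := hA.exists_forall_of_atTop
  set x₀ : ℝ := max x₀' 1 with hx₀def
  have hx₀1 : (1:ℝ) ≤ x₀ := le_max_right _ _
  have hx₀pos : (0:ℝ) < x₀ := lt_of_lt_of_le one_pos hx₀1
  have hx₀ : ∀ y : ℝ, x₀ ≤ y → (1:ℝ)/2 ≤ y ^ γ * (P {ω | y < ξ 0 ω}).toReal := fun y hy =>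
    hx₀' y (le_trans (le_max_left _ _) hy)
  -- Step B : dyadic levels
  set K : ℕ := ⌈16 * L⌉₊ + 1 with hKdef
  have hK16 : 16 * L ≤ (K : ℝ) := by
    have := Nat.le_ceil (16 * L)
    push_cast [hKdef]
    linarith
  set x : ℕ → ℝ := fun k => x₀ * 2 ^ k with hxdef
  have hx1 : ∀ k, (1:ℝ) ≤ x k := by
    intro k
    have h2 : (1:ℝ) ≤ 2 ^ k := one_le_pow₀ (by norm_num)
    calc (1:ℝ) = 1 * 1 := by ring
    _ ≤ x₀ * 2 ^ k := by apply mul_le_mul hx₀1 h2 (by norm_num) hx₀pos.le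
  have hxpos : ∀ k, (0:ℝ) < x k := fun k => lt_of_lt_of_le one_pos (hx1 k)
  have hxstep : ∀ k, x (k+1) = 2 * x k := by
    intro k; simp only [hxdef, pow_succ]; ring
  have hxmono : ∀ k, x k ≤ x (k+1) := by
    intro k; rw [hxstep k]; linarith [hxpos k]
  have hxge : ∀ k, x₀ ≤ x k := by
    intro k
    calc x₀ = x₀ * 1 := by ring
    _ ≤ x₀ * 2 ^ k := by
        apply mul_le_mul_of_nonneg_left (one_le_pow₀ (by norm_num)) hx₀pos.le
  set M : ℝ := x K with hMdef
  have hMpos : (0:ℝ) < M := hxpos K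
  set t : ℝ := 1 / M with htdef
  have htpos : (0:ℝ) < t := by positivity
  have htM : t * M = 1 := by rw [htdef, one_div, inv_mul_cancel₀ hMpos.ne']
  -- the auxiliary function g
  set g : Ω → ℝ := fun ω => ∑ k ∈ Finset.range K,
      if x (k+1) < ξ 0 ω then x (k+1) - x k else 0 with hgdef
  have hg_nonneg : ∀ ω, 0 ≤ g ω := by
    intro ω
    apply Finset.sum_nonneg
    intro k _
    split_ifs with h
    · linarith [hxmono k]
    · exact le_rfl
  have hg_le : ∀ ω, g ω ≤ min M (ξ 0 ω) := by
    intro ω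
    have hterm : ∀ k ∈ Finset.range K,
        (if x (k+1) < ξ 0 ω then x (k+1) - x k else 0) ≤
          min (x (k+1)) (ξ 0 ω) - min (x k) (ξ 0 ω) := by
      intro k _
      split_ifs with h
      · have h1 : x k < ξ 0 ω := lt_of_le_of_lt (hxmono k) h
        rw [min_eq_left h.le, min_eq_left h1.le]
      · have := min_le_min (hxmono k) (le_refl (ξ 0 ω))
        linarith
    have htel : ∑ k ∈ Finset.range K,
        (min (x (k+1)) (ξ 0 ω) - min (x k) (ξ 0 ω)) =
        min (x K) (ξ 0 ω) - min (x 0) (ξ 0 ω) :=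
      Finset.sum_range_sub (fun k => min (x k) (ξ 0 ω)) K
    have h0 : 0 ≤ min (x 0) (ξ 0 ω) := le_min (hxpos 0).le (hnonneg 0 ω)
    calc g ω ≤ ∑ k ∈ Finset.range K,
        (min (x (k+1)) (ξ 0 ω) - min (x k) (ξ 0 ω)) := Finset.sum_le_sum hterm
    _ = min (x K) (ξ 0 ω) - min (x 0) (ξ 0 ω) := htel
    _ ≤ min M (ξ 0 ω) := by rw [hMdef]; linarith
  have hg_le_M : ∀ ω, g ω ≤ M := fun ω => (hg_le ω).trans (min_le_left _ _)
  have hg_le_ξ : ∀ ω, g ω ≤ ξ 0 ω := fun ω => (hg_le ω).trans (min_le_right _ _)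
  -- pointwise exponential bound
  have hpt : ∀ ω, Real.exp (-t * ξ 0 ω) ≤ 1 - t / 2 * g ω := by
    intro ω
    have h1 : t * g ω ≤ 1 := by
      calc t * g ω ≤ t * M := mul_le_mul_of_nonneg_left (hg_le_M ω) htpos.le
      _ = 1 := htM
    have h0 : 0 ≤ t * g ω := mul_nonneg htpos.le (hg_nonneg ω)
    have h2 : Real.exp (-t * ξ 0 ω) ≤ Real.exp (-(t * g ω)) := by
      apply Real.exp_le_exp.mpr
      have := mul_le_mul_of_nonneg_left (hg_le_ξ ω) htpos.le
      linarith
    calc Real.exp (-t * ξ 0 ω) ≤ Real.exp (-(t * g ω)) := h2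
    _ ≤ 1 - t * g ω / 2 := aux_exp_le _ h0 h1
    _ = 1 - t / 2 * g ω := by ring
  -- measurability and integrability
  have hgmeas : Measurable g := by
    apply Finset.measurable_sum
    intro k _
    exact Measurable.ite (measurableSet_lt measurable_const (hmeas 0))
      measurable_const measurable_const
  have hgInt : Integrable g P := by
    apply Integrable.mono' (integrable_const M) hgmeas.aestronglyMeasurable
    filter_upwards with ω
    rw [Real.norm_eq_abs, abs_of_nonneg (hg_nonneg ω)]
    exact hg_le_M ω
  have hexpInt : ∀ (Y : Ω → ℝ), Measurable Y → (∀ ω, 0 ≤ Y ω) →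
      Integrable (fun ω => Real.exp (-t * Y ω)) P := by
    intro Y hY hY0
    apply Integrable.mono' (integrable_const 1)
      (((hY.const_mul (-t)).exp).aestronglyMeasurable)
    filter_upwards with ω
    rw [Real.norm_eq_abs, abs_of_pos (Real.exp_pos _)]
    rw [Real.exp_le_one_iff]
    have := mul_nonneg htpos.le (hY0 ω)
    linarith
  have hInt0 : Integrable (fun ω => Real.exp (-t * ξ 0 ω)) P :=
    hexpInt (ξ 0) (hmeas 0) (hnonneg 0)
  -- integral of g
  have hEg : 4 * L ≤ ∫ ω, g ω ∂P := by
    have hsumInt : ∀ k ∈ Finset.range K, Integrable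
        (fun ω => if x (k+1) < ξ 0 ω then x (k+1) - x k else 0) P := by
      intro k _
      have hS : MeasurableSet {ω | x (k+1) < ξ 0 ω} :=
        measurableSet_lt measurable_const (hmeas 0)
      have : (fun ω => if x (k+1) < ξ 0 ω then x (k+1) - x k else 0) =
          Set.indicator {ω | x (k+1) < ξ 0 ω} (fun _ => x (k+1) - x k) := by
        ext ω
        simp [Set.indicator_apply, Set.mem_setOf_eq]
      rw [this]
      exact (integrable_const _).indicator hS
    have hEg' : ∫ ω, g ω ∂P = ∑ k ∈ Finset.range K,
        (x (k+1) - x k) * (P {ω | x (k+1) < ξ 0 ω}).toReal := by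
      rw [hgdef]
      rw [integral_finset_sum _ hsumInt]
      apply Finset.sum_congr rfl
      intro k _
      have hS : MeasurableSet {ω | x (k+1) < ξ 0 ω} :=
        measurableSet_lt measurable_const (hmeas 0)
      have heq : (fun ω => if x (k+1) < ξ 0 ω then x (k+1) - x k else 0) =
          Set.indicator {ω | x (k+1) < ξ 0 ω} (fun _ => x (k+1) - x k) := by
        ext ω
        simp [Set.indicator_apply, Set.mem_setOf_eq]
      rw [heq, integral_indicator_const _ hS, smul_eq_mul, mul_comm]
      rfl
    rw [hEg']
    have hterm : ∀ k ∈ Finset.range K, (1:ℝ)/4 ≤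
        (x (k+1) - x k) * (P {ω | x (k+1) < ξ 0 ω}).toReal := by
      intro k _
      set τ : ℝ := (P {ω | x (k+1) < ξ 0 ω}).toReal with hτ
      have hτ0 : 0 ≤ τ := ENNReal.toReal_nonneg
      have h1 : (1:ℝ)/2 ≤ (x (k+1)) ^ γ * τ := hx₀ _ (hxge (k+1))
      have h2 : (x (k+1)) ^ γ ≤ x (k+1) := by
        nth_rewrite 2 [← Real.rpow_one (x (k+1))]
        exact Real.rpow_le_rpow_of_exponent_le (hx1 (k+1)) hγ1
      have h3 : (x (k+1)) ^ γ * τ ≤ x (k+1) * τ :=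
        mul_le_mul_of_nonneg_right h2 hτ0
      have h4 : x (k+1) - x k = x k := by rw [hxstep k]; ring
      rw [h4]
      rw [hxstep k] at h1 h3
      nlinarith
    calc 4 * L = (K:ℝ) * (1/4) * ((16 * L) / (K:ℝ)) := by
          have : (K:ℝ) ≠ 0 := by positivity
          field_simp
          ring
    _ ≤ (K:ℝ) * (1/4) := by
          have hKpos : (0:ℝ) < K := by positivity
          have : (16 * L) / (K:ℝ) ≤ 1 := by
            rw [div_le_one hKpos]; exact hK16
          nlinarith
    _ = ∑ _k ∈ Finset.range K, (1:ℝ)/4 := by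
          rw [Finset.sum_const, Finset.card_range, nsmul_eq_mul]
    _ ≤ _ := Finset.sum_le_sum hterm
  -- the mgf bound
  have hmgf : mgf (ξ 0) P (-t) ≤ 1 - 2 * L * t := by
    have h1 : mgf (ξ 0) P (-t) = ∫ ω, Real.exp (-t * ξ 0 ω) ∂P := rfl
    rw [h1]
    have h2 : ∫ ω, Real.exp (-t * ξ 0 ω) ∂P ≤ ∫ ω, (1 - t/2 * g ω) ∂P := by
      apply integral_mono hInt0 ((integrable_const 1).sub (hgInt.const_mul (t/2)))
      intro ω
      exact hpt ω
    have h3 : ∫ ω, (1 - t/2 * g ω) ∂P = 1 - t/2 * ∫ ω, g ω ∂P := by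
      rw [integral_sub (integrable_const 1) (hgInt.const_mul (t/2)),
        integral_const, integral_const_mul]
      simp
    rw [h3] at h2
    have h4 : t/2 * (4 * L) ≤ t/2 * ∫ ω, g ω ∂P :=
      mul_le_mul_of_nonneg_left hEg (by positivity)
    calc ∫ ω, Real.exp (-t * ξ 0 ω) ∂P ≤ 1 - t/2 * ∫ ω, g ω ∂P := h2
    _ ≤ 1 - t/2 * (4 * L) := by linarith
    _ = 1 - 2 * L * t := by ring
  -- identical distribution: same mgf
  have hmgf_eq : ∀ l : ℕ, mgf (ξ l) P (-t) = mgf (ξ 0) P (-t) := by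
    intro l
    have hc : Continuous fun y : ℝ => Real.exp (-t * y) :=
      Real.continuous_exp.comp (continuous_const.mul continuous_id)
    have e1 : mgf (ξ l) P (-t) = ∫ y, Real.exp (-t * y) ∂(P.map (ξ l)) := by
      rw [integral_map (hmeas l).aemeasurable hc.aestronglyMeasurable]
      rfl
    have e2 : mgf (ξ 0) P (-t) = ∫ y, Real.exp (-t * y) ∂(P.map (ξ 0)) := by
      rw [integral_map (hmeas 0).aemeasurable hc.aestronglyMeasurable]
      rfl
    rw [e1, e2, hident l]
  -- conclusion
  refine ⟨L * t, by positivity, ?_⟩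
  filter_upwards [eventually_ge_atTop 1] with n hn
  have hn0 : (0:ℝ) < n := by exact_mod_cast hn
  set S : Ω → ℝ := fun ω => ∑ l ∈ Finset.range n, ξ l ω with hSdef
  have hSmeas : Measurable S :=
    Finset.measurable_sum (Finset.range n) (fun l _ => hmeas l)
  have hS0 : ∀ ω, 0 ≤ S ω := fun ω =>
    Finset.sum_nonneg (fun l _ => hnonneg l ω)
  have hSint : Integrable (fun ω => Real.exp (-t * S ω)) P := hexpInt S hSmeas hS0
  -- threshold comparison
  have hthr : c' n * (n:ℝ) ^ (1/γ) ≤ L * n := by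
    have h1 : (n:ℝ) ^ (1/γ) = (n:ℝ) ^ (1/γ - 1) * n := by
      have h := Real.rpow_add hn0 (1/γ - 1) 1
      rw [Real.rpow_one] at h
      rw [← h]
      norm_num
    rw [h1]
    calc c' n * ((n:ℝ) ^ (1/γ - 1) * (n:ℝ)) = ((n:ℝ) ^ (1/γ-1) * c' n) * n := by ring
    _ ≤ L * n := mul_le_mul_of_nonneg_right (hsup n).le hn0.le
  have hmono : (P {ω | S ω ≤ c' n * (n:ℝ) ^ (1/γ)}).toReal ≤
      (P {ω | S ω ≤ L * n}).toReal := by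
    apply ENNReal.toReal_mono (measure_ne_top P _)
    apply measure_mono
    intro ω hω
    exact le_trans hω hthr
  -- Chernoff
  have hchern : (P {ω | S ω ≤ L * n}).toReal ≤
      Real.exp (-(-t) * (L * n)) * mgf S P (-t) :=
    measure_le_le_exp_mul_mgf (L * n) (by linarith) hSint
  -- mgf of the sum
  have hSsum : S = ∑ l ∈ Finset.range n, ξ l := by
    ext ω; simp [hSdef, Finset.sum_apply]
  have hmgfS : mgf S P (-t) = (mgf (ξ 0) P (-t)) ^ n := by
    rw [hSsum, hindep.mgf_sum hmeas (Finset.range n)]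
    rw [Finset.prod_congr rfl (fun l _ => hmgf_eq l), Finset.prod_const,
      Finset.card_range]
  have hmgf0 : 0 ≤ mgf (ξ 0) P (-t) := mgf_nonneg
  have hb : mgf (ξ 0) P (-t) ≤ Real.exp (-(2 * L * t)) := by
    refine hmgf.trans ?_
    linarith [Real.add_one_le_exp (-(2 * L * t))]
  have hpow : (mgf (ξ 0) P (-t)) ^ n ≤ Real.exp (-(2 * L * t)) ^ n :=
    pow_le_pow_left₀ hmgf0 hb n
  have hexppow : Real.exp (-(2 * L * t)) ^ n = Real.exp (-(2 * L * t) * n) := by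
    rw [← Real.exp_nat_mul]
    ring_nf
  calc (P {ω | S ω ≤ c' n * (n:ℝ) ^ (1/γ)}).toReal
      ≤ (P {ω | S ω ≤ L * n}).toReal := hmono
  _ ≤ Real.exp (-(-t) * (L * n)) * mgf S P (-t) := hchern
  _ ≤ Real.exp (-(-t) * (L * n)) * Real.exp (-(2 * L * t) * n) := by
      rw [hmgfS]
      apply mul_le_mul_of_nonneg_left (hpow.trans_eq hexppow) (Real.exp_pos _).le
  _ = Real.exp (-(L * t * n)) := by
      rw [← Real.exp_add]
      ring_nf
end

section
/- Suppose Γ_i(T) < 1 for every i ∈ {1,…,K}. If α and α′ are two bounded solutions of the linear renewal system on the horizon T (both satisfying the boundary convention α_{i,j}(t,a) = 1 for a ≥ t), then α_{i,j}(t,a) = α′_{i,j}(t,a) for all i, j ∈ {1,…,K} and all 0 ≤ a < t ≤ T; that is, the system has at most one bounded solution. -/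
open MeasureTheory Set

/-- A bounded solution of the linear renewal system on the horizon `T`: a family of
bounded measurable functions `α i j : [0,T] × [0,∞) → ℝ` (here defined on all of
`ℝ × ℝ`) satisfying the boundary convention `α i j t a = 1` for `a ≥ t` and, for
`0 ≤ a < t ≤ T`, the renewal equations with Lebesgue–Stieltjes integrals against the
lifetime distributions `μ i` (the measures whose distribution functions are `Γ_i`). -/
def IsLinearRenewalSolution {K : ℕ} (m : Fin (K + 1) → Fin (K + 1) → ℝ)
    (μ : Fin (K + 1) → Measure ℝ) (T : ℝ)
    (α : Fin (K + 1) → Fin (K + 1) → ℝ → ℝ → ℝ) : Prop :=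
  (∀ i j, Measurable (Function.uncurry (α i j))) ∧
  (∃ C : ℝ, ∀ i j t a, |α i j t a| ≤ C) ∧
  (∀ i j : Fin (K + 1), ∀ t a : ℝ, t ≤ a → α i j t a = 1) ∧
  (∀ i : Fin (K + 1), ∀ t a : ℝ, 0 ≤ a → a < t → t ≤ T →
    α i i t a = ∫ s in Icc (0 : ℝ) a, (∑ k, m i k * α k i (t - s) (a - s)) ∂(μ i)) ∧
  (∀ i j : Fin (K + 1), j ≠ i → ∀ t a : ℝ, 0 ≤ a → a < t → t ≤ T →
    α i j t a = (1 - (μ i (Iic t)).toReal) +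
      ∫ s in Icc (0 : ℝ) t, (∑ k, m i k * α k j (t - s) a) ∂(μ i))

/-- if `Γ_i(T) < 1` for every type `i`, then the linear renewal system on
the horizon `T` has at most one bounded solution: any two bounded solutions agree for
all `i, j` and all `0 ≤ a < t ≤ T`. -/
theorem statement8 {K : ℕ} (m : Fin (K + 1) → Fin (K + 1) → ℝ)
    (hm_nonneg : ∀ i j, 0 ≤ m i j) (hm_row : ∀ i, ∑ j, m i j = 1)
    (μ : Fin (K + 1) → Measure ℝ) [∀ i, IsProbabilityMeasure (μ i)]
    (hsupp : ∀ i, μ i (Iic 0) = 0)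
    (T : ℝ) (hT : 0 < T) (hΓT : ∀ i, (μ i (Iic T)).toReal < 1)
    (α α' : Fin (K + 1) → Fin (K + 1) → ℝ → ℝ → ℝ)
    (hα : IsLinearRenewalSolution m μ T α) (hα' : IsLinearRenewalSolution m μ T α') :
    ∀ i j : Fin (K + 1), ∀ t a : ℝ, 0 ≤ a → a < t → t ≤ T → α i j t a = α' i j t a := by
  obtain ⟨hmeas, ⟨C, hC⟩, hbd, hdiag, hoff⟩ := hα
  obtain ⟨hmeas', ⟨C', hC'⟩, hbd', hdiag', hoff'⟩ := hα'
  -- q : max of Γ_i(T)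
  set q : ℝ := Finset.univ.sup' Finset.univ_nonempty (fun i => (μ i (Iic T)).toReal) with hq_def
  have hq1 : q < 1 := by
    rw [hq_def]
    exact (Finset.sup'_lt_iff Finset.univ_nonempty).mpr fun i _ => hΓT i
  have hqi : ∀ i : Fin (K + 1), (μ i (Iic T)).toReal ≤ q := by
    intro i
    rw [hq_def]
    exact Finset.le_sup' (fun i => (μ i (Iic T)).toReal) (Finset.mem_univ i)
  have hq0 : 0 ≤ q := le_trans ENNReal.toReal_nonneg (hqi 0)
  -- the set of values of |δ|
  set S : Set ℝ := {x | ∃ i j : Fin (K + 1), ∃ t a : ℝ,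
      0 ≤ a ∧ a < t ∧ t ≤ T ∧ x = |α i j t a - α' i j t a|} with hS_def
  have hSne : S.Nonempty := ⟨|α 0 0 T 0 - α' 0 0 T 0|, 0, 0, T, 0, le_refl 0, hT, le_refl T, rfl⟩
  have hSbdd : BddAbove S := by
    refine ⟨C + C', ?_⟩
    rintro x ⟨i, j, t, a, _, _, _, rfl⟩
    calc |α i j t a - α' i j t a| ≤ |α i j t a| + |α' i j t a| := abs_sub _ _
      _ ≤ C + C' := add_le_add (hC i j t a) (hC' i j t a)
  set D : ℝ := sSup S with hD_def
  have hD_mem : ∀ (i j : Fin (K + 1)) (t a : ℝ), 0 ≤ a → a < t → t ≤ T →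
      |α i j t a - α' i j t a| ≤ D := fun i j t a h1 h2 h3 =>
    le_csSup hSbdd ⟨i, j, t, a, h1, h2, h3, rfl⟩
  have hD0 : 0 ≤ D := le_trans (abs_nonneg _) (hD_mem 0 0 T 0 (le_refl 0) hT (le_refl T))
  -- integrability helper
  have hint : ∀ (γ : Fin (K + 1) → Fin (K + 1) → ℝ → ℝ → ℝ),
      (∀ i j, Measurable (Function.uncurry (γ i j))) →
      ∀ (Cg : ℝ), (∀ i j t a, |γ i j t a| ≤ Cg) →
      ∀ (i j : Fin (K + 1)) (g : ℝ → ℝ × ℝ), Measurable g → ∀ (E : Set ℝ),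
      Integrable (fun s => ∑ k, m i k * γ k j (g s).1 (g s).2) ((μ i).restrict E) := by
    intro γ hγm Cg hγb i j g hg E
    have hmeas0 : Measurable (fun s => ∑ k, m i k * γ k j (g s).1 (g s).2) := by
      apply Finset.measurable_sum
      intro k _
      exact ((hγm k j).comp hg).const_mul (m i k)
    refine ⟨hmeas0.aestronglyMeasurable, ?_⟩
    apply MeasureTheory.HasFiniteIntegral.of_bounded (C := Cg)
    filter_upwards with s
    calc ‖∑ k, m i k * γ k j (g s).1 (g s).2‖
        ≤ ∑ k, ‖m i k * γ k j (g s).1 (g s).2‖ := norm_sum_le _ _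
      _ ≤ ∑ k, m i k * Cg := by
          apply Finset.sum_le_sum
          intro k _
          rw [Real.norm_eq_abs, abs_mul, abs_of_nonneg (hm_nonneg i k)]
          exact mul_le_mul_of_nonneg_left (hγb k j _ _) (hm_nonneg i k)
      _ = Cg := by rw [← Finset.sum_mul, hm_row i, one_mul]
  -- key estimate
  have hkey : ∀ (i j : Fin (K + 1)) (t a : ℝ), 0 ≤ a → a < t → t ≤ T →
      |α i j t a - α' i j t a| ≤ q * D := by
    intro i j t a ha hat htT
    by_cases hji : j = i
    · subst hji
      rw [hdiag j t a ha hat htT, hdiag' j t a ha hat htT, ←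
        MeasureTheory.integral_sub
          (hint α hmeas C hC j j (fun s => (t - s, a - s))
            ((measurable_const.sub measurable_id).prodMk
              (measurable_const.sub measurable_id)) _)
          (hint α' hmeas' C' hC' j j (fun s => (t - s, a - s))
            ((measurable_const.sub measurable_id).prodMk
              (measurable_const.sub measurable_id)) _)]
      simp only [← Finset.sum_sub_distrib, ← mul_sub]
      have hfin : μ j (Icc (0 : ℝ) a) < ⊤ := lt_of_le_of_lt (measure_mono (subset_univ _))
        (by simp)
      calc |∫ s in Icc (0 : ℝ) a,
              (∑ k, m j k * (α k j (t - s) (a - s) - α' k j (t - s) (a - s))) ∂(μ j)|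
          ≤ D * (μ j (Icc (0 : ℝ) a)).toReal := by
            rw [← Real.norm_eq_abs]
            apply MeasureTheory.norm_setIntegral_le_of_norm_le_const_ae' hfin
            · filter_upwards with s hs
              obtain ⟨hs0, hsa⟩ := hs
              calc ‖∑ k, m j k * (α k j (t - s) (a - s) - α' k j (t - s) (a - s))‖
                  ≤ ∑ k, ‖m j k * (α k j (t - s) (a - s) - α' k j (t - s) (a - s))‖ :=
                    norm_sum_le _ _
                _ ≤ ∑ k, m j k * D := by
                    apply Finset.sum_le_sum
                    intro k _
                    rw [Real.norm_eq_abs, abs_mul, abs_of_nonneg (hm_nonneg j k)]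
                    refine mul_le_mul_of_nonneg_left ?_ (hm_nonneg j k)
                    exact hD_mem k j (t - s) (a - s) (by linarith) (by linarith)
                      (by linarith)
                _ = D := by rw [← Finset.sum_mul, hm_row j, one_mul]
        _ ≤ D * q := by
            refine mul_le_mul_of_nonneg_left ?_ hD0
            refine le_trans ?_ (hqi j)
            apply ENNReal.toReal_mono (by simpa using (measure_lt_top (μ j) (Iic T)).ne)
            exact measure_mono (fun x hx => le_trans hx.2 (le_of_lt (lt_of_lt_of_le hat htT)))
        _ = q * D := mul_comm _ _
    · rw [hoff i j hji t a ha hat htT, hoff' i j hji t a ha hat htT, add_sub_add_left_eq_sub, ←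
        MeasureTheory.integral_sub
          (hint α hmeas C hC i j (fun s => (t - s, a))
            ((measurable_const.sub measurable_id).prodMk measurable_const) _)
          (hint α' hmeas' C' hC' i j (fun s => (t - s, a))
            ((measurable_const.sub measurable_id).prodMk measurable_const) _)]
      simp only [← Finset.sum_sub_distrib, ← mul_sub]
      have hfin : μ i (Icc (0 : ℝ) t) < ⊤ := lt_of_le_of_lt (measure_mono (subset_univ _))
        (by simp)
      calc |∫ s in Icc (0 : ℝ) t,
              (∑ k, m i k * (α k j (t - s) a - α' k j (t - s) a)) ∂(μ i)|
          ≤ D * (μ i (Icc (0 : ℝ) t)).toReal := by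
            rw [← Real.norm_eq_abs]
            apply MeasureTheory.norm_setIntegral_le_of_norm_le_const_ae' hfin
            · filter_upwards with s hs
              obtain ⟨hs0, hst⟩ := hs
              calc ‖∑ k, m i k * (α k j (t - s) a - α' k j (t - s) a)‖
                  ≤ ∑ k, ‖m i k * (α k j (t - s) a - α' k j (t - s) a)‖ := norm_sum_le _ _
                _ ≤ ∑ k, m i k * D := by
                    apply Finset.sum_le_sum
                    intro k _
                    rw [Real.norm_eq_abs, abs_mul, abs_of_nonneg (hm_nonneg i k)]
                    refine mul_le_mul_of_nonneg_left ?_ (hm_nonneg i k)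
                    by_cases hta : t - s ≤ a
                    · rw [hbd k j _ _ hta, hbd' k j _ _ hta, sub_self, abs_zero]
                      exact hD0
                    · exact hD_mem k j (t - s) a ha (by linarith) (by linarith)
                _ = D := by rw [← Finset.sum_mul, hm_row i, one_mul]
        _ ≤ D * q := by
            refine mul_le_mul_of_nonneg_left ?_ hD0
            refine le_trans ?_ (hqi i)
            apply ENNReal.toReal_mono (by simpa using (measure_lt_top (μ i) (Iic T)).ne)
            exact measure_mono (fun x hx => le_trans hx.2 htT)
        _ = q * D := mul_comm _ _
  -- D ≤ q * D hence D = 0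
  have hDle : D ≤ q * D := by
    apply csSup_le hSne
    rintro x ⟨i, j, t, a, h1, h2, h3, rfl⟩
    exact hkey i j t a h1 h2 h3
  have hD_eq : D = 0 := by nlinarith
  intro i j t a h1 h2 h3
  have := hD_mem i j t a h1 h2 h3
  rw [hD_eq] at this
  have h0 : |α i j t a - α' i j t a| = 0 := le_antisymm this (abs_nonneg _)
  rw [abs_eq_zero, sub_eq_zero] at h0
  exact h0
end

section
/- Let f_1, …, f_K : [0,1]^K → [0,1] satisfy 1 − f_i(1 − z) ≤ Σ_{k=1}^K m_{i,k} z_k for every z ∈ [0,1]^K and every i. Suppose Γ_i(T) < 1 for every i. Let ν_{i,j} : [0,T] × [0,∞) → [0,1] satisfy, for all 0 ≤ a < t ≤ T: ν_{i,i}(t,a) = ∫_{[0,a]} [1 − f_i(1 − ν_{·,i}(t−s, a−s))] dΓ_i(s), and for j ≠ i: ν_{i,j}(t,a) = 1 − Γ_i(t) + ∫_{[0,t]} [1 − f_i(1 − ν_{·,j}(t−s, a))] dΓ_i(s), where ν_{·,j}(u,b) denotes the vector (ν_{1,j}(u,b), …, ν_{K,j}(u,b)) and values ν_{k,j}(u,b)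 with b ≥ u are understood via the given function. Let α be a bounded solution of the linear renewal system on [0,T] with boundary convention α_{i,j}(t,a) = 1 for a ≥ t. Then ν_{i,j}(t,a) ≤ α_{i,j}(t,a) for all i, j and all 0 ≤ a < t ≤ T. -/
open MeasureTheory Set

/-- if the offspring generating functions satisfy
`1 − f_i(1 − z) ≤ Σ_k m_{i,k} z_k` on `[0,1]^K`, `Γ_i(T) < 1` for every `i`, and
`ν` is a `[0,1]`-valued solution of the nonlinear renewal system on `[0,T]`, then `ν`
is dominated by any bounded solution `α` of the linear renewal system:
`ν i j t a ≤ α i j t a` for all `i, j` and `0 ≤ a < t ≤ T`. -/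
theorem statement9 {K : ℕ} (m : Fin (K + 1) → Fin (K + 1) → ℝ)
    (hm_nonneg : ∀ i j, 0 ≤ m i j) (hm_row : ∀ i, ∑ j, m i j = 1)
    (μ : Fin (K + 1) → Measure ℝ) [∀ i, IsProbabilityMeasure (μ i)]
    (hsupp : ∀ i, μ i (Iic 0) = 0)
    (T : ℝ) (hT : 0 < T) (hΓT : ∀ i, (μ i (Iic T)).toReal < 1)
    (f : Fin (K + 1) → (Fin (K + 1) → ℝ) → ℝ)
    (hf_range : ∀ i s, (∀ k, s k ∈ Icc (0 : ℝ) 1) → f i s ∈ Icc (0 : ℝ) 1)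
    (hf_dom : ∀ i, ∀ z : Fin (K + 1) → ℝ, (∀ k, z k ∈ Icc (0 : ℝ) 1) →
      1 - f i (fun k => 1 - z k) ≤ ∑ k, m i k * z k)
    (ν : Fin (K + 1) → Fin (K + 1) → ℝ → ℝ → ℝ)
    (hν_meas : ∀ i j, Measurable (Function.uncurry (ν i j)))
    (hν_range : ∀ i j t a, ν i j t a ∈ Icc (0 : ℝ) 1)
    (hν_diag : ∀ i : Fin (K + 1), ∀ t a : ℝ, 0 ≤ a → a < t → t ≤ T →
      ν i i t a = ∫ s in Icc (0 : ℝ) a,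
        (1 - f i (fun k => 1 - ν k i (t - s) (a - s))) ∂(μ i))
    (hν_off : ∀ i j : Fin (K + 1), j ≠ i → ∀ t a : ℝ, 0 ≤ a → a < t → t ≤ T →
      ν i j t a = (1 - (μ i (Iic t)).toReal) +
        ∫ s in Icc (0 : ℝ) t, (1 - f i (fun k => 1 - ν k j (t - s) a)) ∂(μ i))
    (α : Fin (K + 1) → Fin (K + 1) → ℝ → ℝ → ℝ)
    (hα : IsLinearRenewalSolution m μ T α) :
    ∀ i j : Fin (K + 1), ∀ t a : ℝ, 0 ≤ a → a < t → t ≤ T → ν i j t a ≤ α i j t a := by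
  
  obtain ⟨hα_meas, ⟨C, hC⟩, hα_bd, hα_diag, hα_off⟩ := hα
  have hC0 : 0 ≤ C := le_trans (abs_nonneg _) (hC 0 0 0 0)
  -- the set of differences at interior points
  set S : Set ℝ := {d | ∃ i j : Fin (K + 1), ∃ t a : ℝ,
    0 ≤ a ∧ a < t ∧ t ≤ T ∧ d = ν i j t a - α i j t a} with hSdef
  have hbdd : BddAbove (insert (0 : ℝ) S) := by
    refine ⟨1 + C, ?_⟩
    rintro x (rfl | ⟨i, j, t, a, _, _, _, rfl⟩)
    · linarith
    · have h1 := (hν_range i j t a).2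
      have h2 := (abs_le.mp (hC i j t a)).1
      linarith
  set M : ℝ := sSup (insert (0 : ℝ) S) with hMdef
  have hM0 : 0 ≤ M := le_csSup hbdd (mem_insert _ _)
  have hdle : ∀ (i j : Fin (K + 1)) (t a : ℝ), 0 ≤ a → t ≤ T →
      ν i j t a - α i j t a ≤ M := by
    intro i j t a ha htT
    by_cases h : a < t
    · exact le_csSup hbdd (mem_insert_iff.mpr (Or.inr ⟨i, j, t, a, ha, h, htT, rfl⟩))
    · rw [hα_bd i j t a (not_lt.mp h)]
      have := (hν_range i j t a).2
      linarith
  -- the contraction constant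
  set c : ℝ := Finset.univ.sup' Finset.univ_nonempty (fun i => (μ i (Iic T)).toReal)
    with hcdef
  have hc1 : c < 1 := (Finset.sup'_lt_iff Finset.univ_nonempty).mpr fun i _ => hΓT i
  have hcle : ∀ i : Fin (K + 1), (μ i (Iic T)).toReal ≤ c := by
    intro i
    rw [hcdef]
    exact Finset.le_sup' (fun i => (μ i (Iic T)).toReal) (Finset.mem_univ i)
  have hc0 : 0 ≤ c := le_trans ENNReal.toReal_nonneg (hcle 0)
  -- integrability of bounded measurable functions
  have hInt : ∀ (i : Fin (K + 1)) (s : Set ℝ) (g : ℝ → ℝ) (B : ℝ), Measurable g →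
      (∀ x, |g x| ≤ B) → IntegrableOn g s (μ i) := by
    intro i s g B hg hB
    exact ⟨hg.aestronglyMeasurable.restrict,
      MeasureTheory.HasFiniteIntegral.of_bounded (C := B)
        (Filter.Eventually.of_forall fun x => by simpa [Real.norm_eq_abs] using hB x)⟩
  have hmeasν : ∀ (k j : Fin (K + 1)) (u v : ℝ → ℝ), Measurable u → Measurable v →
      Measurable (fun s => ν k j (u s) (v s)) :=
    fun k j u v hu hv => (hν_meas k j).comp (hu.prodMk hv)
  have hmeasα : ∀ (k j : Fin (K + 1)) (u v : ℝ → ℝ), Measurable u → Measurable v →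
      Measurable (fun s => α k j (u s) (v s)) :=
    fun k j u v hu hv => (hα_meas k j).comp (hu.prodMk hv)
  -- the key contraction estimate at interior points
  have hkey : ∀ (i j : Fin (K + 1)) (t a : ℝ), 0 ≤ a → a < t → t ≤ T →
      ν i j t a - α i j t a ≤ c * M := by
    intro i j t a ha hat htT
    have haT : a ≤ T := le_trans (le_of_lt hat) htT
    -- common machinery for both cases
    by_cases hji : j = i
    · subst hji
      set F : ℝ → ℝ := fun s => ∑ k, m j k * ν k j (t - s) (a - s) with hF
      set G : ℝ → ℝ := fun s => ∑ k, m j k * α k j (t - s) (a - s) with hG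
      have hFmeas : Measurable F := by
        apply Finset.measurable_sum
        intro k _
        exact (hmeasν k j (fun s => t - s) (fun s => a - s)
          (measurable_const.sub measurable_id) (measurable_const.sub measurable_id)).const_mul _
      have hGmeas : Measurable G := by
        apply Finset.measurable_sum
        intro k _
        exact (hmeasα k j (fun s => t - s) (fun s => a - s)
          (measurable_const.sub measurable_id) (measurable_const.sub measurable_id)).const_mul _
      have hFbd : ∀ x, |F x| ≤ 1 := by
        intro x
        rw [abs_le]
        constructor
        · have : (0:ℝ) ≤ F x := Finset.sum_nonneg fun k _ =>
            mul_nonneg (hm_nonneg j k) (hν_range k j _ _).1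
          linarith
        · calc F x ≤ ∑ k, m j k * 1 := Finset.sum_le_sum fun k _ =>
                mul_le_mul_of_nonneg_left (hν_range k j _ _).2 (hm_nonneg j k)
          _ = 1 := by simp [hm_row j]
      have hGbd : ∀ x, |G x| ≤ C := by
        intro x
        calc |G x| ≤ ∑ k, |m j k * α k j (t - x) (a - x)| := Finset.abs_sum_le_sum_abs _ _
          _ ≤ ∑ k, m j k * C := Finset.sum_le_sum fun k _ => by
              rw [abs_mul, abs_of_nonneg (hm_nonneg j k)]
              exact mul_le_mul_of_nonneg_left (hC k j _ _) (hm_nonneg j k)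
          _ = C := by rw [← Finset.sum_mul, hm_row j, one_mul]
      have hFint : IntegrableOn F (Icc (0:ℝ) a) (μ j) := hInt j _ F 1 hFmeas hFbd
      have hGint : IntegrableOn G (Icc (0:ℝ) a) (μ j) := hInt j _ G C hGmeas hGbd
      have step1 : ν j j t a ≤ ∫ s in Icc (0:ℝ) a, F s ∂(μ j) := by
        rw [hν_diag j t a ha hat htT]
        apply MeasureTheory.integral_mono_of_nonneg
        · refine Filter.Eventually.of_forall fun s => ?_
          have := (hf_range j (fun k => 1 - ν k j (t - s) (a - s)) (fun k => by
            have h1 := (hν_range k j (t - s) (a - s)).1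
            have h2 := (hν_range k j (t - s) (a - s)).2
            show (1 - ν k j (t - s) (a - s)) ∈ Icc (0:ℝ) 1
            exact Set.mem_Icc.mpr ⟨by linarith, by linarith⟩)).2
          simp only [Pi.zero_apply]
          linarith
        · exact hFint
        · refine Filter.Eventually.of_forall fun s => ?_
          exact hf_dom j (fun k => ν k j (t - s) (a - s)) (fun k => hν_range k j _ _)
      have step2 : (∫ s in Icc (0:ℝ) a, F s ∂(μ j)) - (∫ s in Icc (0:ℝ) a, G s ∂(μ j))
          ≤ (μ j (Icc (0:ℝ) a)).toReal * M := by
        rw [← MeasureTheory.integral_sub hFint hGint]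
        calc (∫ s in Icc (0:ℝ) a, (F s - G s) ∂(μ j))
            ≤ ∫ _ in Icc (0:ℝ) a, M ∂(μ j) := by
              apply MeasureTheory.setIntegral_mono_on (hFint.sub hGint)
                (MeasureTheory.integrableOn_const (measure_ne_top _ _))
                measurableSet_Icc
              intro s hs
              calc F s - G s = ∑ k, m j k * (ν k j (t - s) (a - s) - α k j (t - s) (a - s)) := by
                    rw [hF, hG, ← Finset.sum_sub_distrib]
                    exact Finset.sum_congr rfl fun k _ => by ring
                _ ≤ ∑ k, m j k * M := Finset.sum_le_sum fun k _ =>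
                    mul_le_mul_of_nonneg_left
                      (hdle k j (t - s) (a - s) (by linarith [hs.2]) (by linarith [hs.1]))
                      (hm_nonneg j k)
                _ = M := by rw [← Finset.sum_mul, hm_row j, one_mul]
          _ = (μ j (Icc (0:ℝ) a)).toReal * M := by
              rw [MeasureTheory.setIntegral_const, smul_eq_mul, Measure.real]
      have step3 : (μ j (Icc (0:ℝ) a)).toReal * M ≤ c * M := by
        apply mul_le_mul_of_nonneg_right _ hM0
        refine le_trans (ENNReal.toReal_mono (measure_ne_top _ _)
          (measure_mono fun x hx => le_trans hx.2 haT)) (hcle j)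
      have e2 := hα_diag j t a ha hat htT
      rw [e2]
      calc ν j j t a - ∫ s in Icc (0:ℝ) a, G s ∂(μ j)
          ≤ (∫ s in Icc (0:ℝ) a, F s ∂(μ j)) - (∫ s in Icc (0:ℝ) a, G s ∂(μ j)) := by
            linarith
        _ ≤ (μ j (Icc (0:ℝ) a)).toReal * M := step2
        _ ≤ c * M := step3
    · set F : ℝ → ℝ := fun s => ∑ k, m i k * ν k j (t - s) a with hF
      set G : ℝ → ℝ := fun s => ∑ k, m i k * α k j (t - s) a with hG
      have hFmeas : Measurable F := by
        apply Finset.measurable_sum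
        intro k _
        exact (hmeasν k j (fun s => t - s) (fun _ => a)
          (measurable_const.sub measurable_id) measurable_const).const_mul _
      have hGmeas : Measurable G := by
        apply Finset.measurable_sum
        intro k _
        exact (hmeasα k j (fun s => t - s) (fun _ => a)
          (measurable_const.sub measurable_id) measurable_const).const_mul _
      have hFbd : ∀ x, |F x| ≤ 1 := by
        intro x
        rw [abs_le]
        constructor
        · have : (0:ℝ) ≤ F x := Finset.sum_nonneg fun k _ =>
            mul_nonneg (hm_nonneg i k) (hν_range k j _ _).1
          linarith
        · calc F x ≤ ∑ k, m i k * 1 := Finset.sum_le_sum fun k _ =>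
                mul_le_mul_of_nonneg_left (hν_range k j _ _).2 (hm_nonneg i k)
          _ = 1 := by simp [hm_row i]
      have hGbd : ∀ x, |G x| ≤ C := by
        intro x
        calc |G x| ≤ ∑ k, |m i k * α k j (t - x) a| := Finset.abs_sum_le_sum_abs _ _
          _ ≤ ∑ k, m i k * C := Finset.sum_le_sum fun k _ => by
              rw [abs_mul, abs_of_nonneg (hm_nonneg i k)]
              exact mul_le_mul_of_nonneg_left (hC k j _ _) (hm_nonneg i k)
          _ = C := by rw [← Finset.sum_mul, hm_row i, one_mul]
      have hFint : IntegrableOn F (Icc (0:ℝ) t) (μ i) := hInt i _ F 1 hFmeas hFbd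
      have hGint : IntegrableOn G (Icc (0:ℝ) t) (μ i) := hInt i _ G C hGmeas hGbd
      have step1 : ν i j t a ≤ (1 - (μ i (Iic t)).toReal) +
          ∫ s in Icc (0:ℝ) t, F s ∂(μ i) := by
        rw [hν_off i j hji t a ha hat htT]
        have : (∫ s in Icc (0:ℝ) t, (1 - f i (fun k => 1 - ν k j (t - s) a)) ∂(μ i))
            ≤ ∫ s in Icc (0:ℝ) t, F s ∂(μ i) := by
          apply MeasureTheory.integral_mono_of_nonneg
          · refine Filter.Eventually.of_forall fun s => ?_
            have := (hf_range i (fun k => 1 - ν k j (t - s) a) (fun k => by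
              have h1 := (hν_range k j (t - s) a).1
              have h2 := (hν_range k j (t - s) a).2
              show (1 - ν k j (t - s) a) ∈ Icc (0:ℝ) 1
              exact Set.mem_Icc.mpr ⟨by linarith, by linarith⟩)).2
            simp only [Pi.zero_apply]
            linarith
          · exact hFint
          · refine Filter.Eventually.of_forall fun s => ?_
            exact hf_dom i (fun k => ν k j (t - s) a) (fun k => hν_range k j _ _)
        linarith
      have step2 : (∫ s in Icc (0:ℝ) t, F s ∂(μ i)) - (∫ s in Icc (0:ℝ) t, G s ∂(μ i))
          ≤ (μ i (Icc (0:ℝ) t)).toReal * M := by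
        rw [← MeasureTheory.integral_sub hFint hGint]
        calc (∫ s in Icc (0:ℝ) t, (F s - G s) ∂(μ i))
            ≤ ∫ _ in Icc (0:ℝ) t, M ∂(μ i) := by
              apply MeasureTheory.setIntegral_mono_on (hFint.sub hGint)
                (MeasureTheory.integrableOn_const (measure_ne_top _ _))
                measurableSet_Icc
              intro s hs
              calc F s - G s = ∑ k, m i k * (ν k j (t - s) a - α k j (t - s) a) := by
                    rw [hF, hG, ← Finset.sum_sub_distrib]
                    exact Finset.sum_congr rfl fun k _ => by ring
                _ ≤ ∑ k, m i k * M := Finset.sum_le_sum fun k _ =>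
                    mul_le_mul_of_nonneg_left
                      (hdle k j (t - s) a ha (by linarith [hs.1]))
                      (hm_nonneg i k)
                _ = M := by rw [← Finset.sum_mul, hm_row i, one_mul]
          _ = (μ i (Icc (0:ℝ) t)).toReal * M := by
              rw [MeasureTheory.setIntegral_const, smul_eq_mul, Measure.real]
      have step3 : (μ i (Icc (0:ℝ) t)).toReal * M ≤ c * M := by
        apply mul_le_mul_of_nonneg_right _ hM0
        refine le_trans (ENNReal.toReal_mono (measure_ne_top _ _)
          (measure_mono fun x hx => le_trans hx.2 htT)) (hcle i)
      have e2 := hα_off i j hji t a ha hat htT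
      rw [e2]
      calc ν i j t a - ((1 - (μ i (Iic t)).toReal) + ∫ s in Icc (0:ℝ) t, G s ∂(μ i))
          ≤ (∫ s in Icc (0:ℝ) t, F s ∂(μ i)) - (∫ s in Icc (0:ℝ) t, G s ∂(μ i)) := by
            linarith
        _ ≤ (μ i (Icc (0:ℝ) t)).toReal * M := step2
        _ ≤ c * M := step3
  -- conclude M ≤ 0 by contraction
  have hMc : M ≤ c * M := by
    apply csSup_le (insert_nonempty _ _)
    rintro x (rfl | ⟨i, j, t, a, ha, hat, htT, rfl⟩)
    · exact mul_nonneg hc0 hM0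
    · exact hkey i j t a ha hat htT
  have hMneg : M ≤ 0 := by nlinarith
  intro i j t a ha hat htT
  have := hdle i j t a ha htT
  linarith
end
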